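/- arXiv:0806.0463 — 7 statements merged into one kernel-verified Lean document; each statement's English description precedes it below -/
import Mathlib

section
/- Let Y be a Young diagram and S a set of m distinct removable boxes of Y. Call a box s ∈ Y irrelevant (with respect to S) if the topmost box of the column of s belongs to S and the rightmost box of the row of s belongs to S. Then the number of irrelevant boxes of Y is exactly m(m+1)/2. -/
open scoped Classical

/-- The removable boxes of a Young diagram `Y`. -/
noncomputable def YoungDiagram.removables (Y : YoungDiagram) : Finset (ℕ × ℕ) :=
  Y.cells.filter fun c => (c.1 + 1, c.2) ∉ Y ∧ (c.1, c.2 + 1) ∉ Y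

/-- A box of `Y` is irrelevant w.r.t. a set `S` of marked removable boxes if both the
last box of its column and the last box of its row are marked. -/
noncomputable def irrelevantCells (Y : YoungDiagram) (S : Finset (ℕ × ℕ)) :
    Finset (ℕ × ℕ) :=
  Y.cells.filter fun c => (Y.colLen c.2 - 1, c.2) ∈ S ∧ (c.1, Y.rowLen c.1 - 1) ∈ S

section aux

variable {Y : YoungDiagram} {S : Finset (ℕ × ℕ)}

lemma removables_mem (hS : S ⊆ Y.removables) {s : ℕ × ℕ} (hs : s ∈ S) : s ∈ Y := by
  have := hS hs
  simp only [YoungDiagram.removables, Finset.mem_filter] at this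
  exact this.1

lemma removables_rowLen (hS : S ⊆ Y.removables) {s : ℕ × ℕ} (hs : s ∈ S) :
    Y.rowLen s.1 = s.2 + 1 := by
  have h := hS hs
  simp only [YoungDiagram.removables, Finset.mem_filter] at h
  have h1 : s.2 < Y.rowLen s.1 := YoungDiagram.mem_iff_lt_rowLen.mp (by simpa using h.1)
  have h2 : ¬ s.2 + 1 < Y.rowLen s.1 := fun hc =>
    h.2.2 (YoungDiagram.mem_iff_lt_rowLen.mpr hc)
  omega

lemma removables_colLen (hS : S ⊆ Y.removables) {s : ℕ × ℕ} (hs : s ∈ S) :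
    Y.colLen s.2 = s.1 + 1 := by
  have h := hS hs
  simp only [YoungDiagram.removables, Finset.mem_filter] at h
  have h1 : s.1 < Y.colLen s.2 := YoungDiagram.mem_iff_lt_colLen.mp (by simpa using h.1)
  have h2 : ¬ s.1 + 1 < Y.colLen s.2 := fun hc =>
    h.2.1 (YoungDiagram.mem_iff_lt_colLen.mpr hc)
  omega

lemma removables_row_inj (hS : S ⊆ Y.removables) {s t : ℕ × ℕ} (hs : s ∈ S) (ht : t ∈ S)
    (h : s.1 = t.1) : s = t := by
  have h1 := removables_rowLen hS hs
  have h2 := removables_rowLen hS ht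
  rw [h] at h1
  exact Prod.ext h (by omega)

lemma removables_col_inj (hS : S ⊆ Y.removables) {s t : ℕ × ℕ} (hs : s ∈ S) (ht : t ∈ S)
    (h : s.2 = t.2) : s = t := by
  have h1 := removables_colLen hS hs
  have h2 := removables_colLen hS ht
  rw [h] at h1
  exact Prod.ext (by omega) h

end aux

/-- If `S` is a set of `m` removable boxes of a Young diagram `Y`, then the number of
irrelevant boxes of `Y` with respect to `S` is exactly `m(m+1)/2`. -/
theorem card_irrelevantCells (Y : YoungDiagram) (m : ℕ) (S : Finset (ℕ × ℕ))
    (hS : S ⊆ Y.removables) (hm : S.card = m) :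
    (irrelevantCells Y S).card = m * (m + 1) / 2 := by
  classical
  set R : Finset ℕ := S.image Prod.fst with hR
  have hRcard : R.card = m := by
    rw [hR, Finset.card_image_of_injOn, hm]
    intro s hs t ht h
    exact removables_row_inj hS hs ht h
  -- step 1: card (irrelevantCells Y S) = card T where T = pairs (x,y) ∈ R×R with x ≤ y
  set T : Finset (ℕ × ℕ) := (R ×ˢ R).filter (fun p => p.1 ≤ p.2) with hT
  have hmemR : ∀ {x : ℕ}, x ∈ R → ∃ s ∈ S, s.1 = x := by
    intro x hx
    simpa using Finset.mem_image.mp hx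
  have key : (irrelevantCells Y S).card = T.card := by
    apply Finset.card_bij (fun c _ => (c.1, Y.colLen c.2 - 1))
    · -- maps into T
      intro c hc
      simp only [irrelevantCells, Finset.mem_filter] at hc
      obtain ⟨hcY, hcol, hrow⟩ := hc
      have hrowS : (c.1, Y.rowLen c.1 - 1) ∈ S := hrow
      have hcolS : (Y.colLen c.2 - 1, c.2) ∈ S := hcol
      have h1 : Y.rowLen c.1 = (Y.rowLen c.1 - 1) + 1 := by
        have := removables_rowLen hS hrowS
        simpa using this
      simp only [hT, Finset.mem_filter, Finset.mem_product]
      refine ⟨⟨Finset.mem_image.mpr ⟨_, hrowS, rfl⟩,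
        Finset.mem_image.mpr ⟨_, hcolS, rfl⟩⟩, ?_⟩
      -- need c.1 ≤ colLen c.2 - 1
      by_contra hlt
      push_neg at hlt
      -- colLen c.2 - 1 < c.1, so rowLen c.1 ≤ rowLen (colLen c.2 - 1)
      have hanti := Y.rowLen_anti (Y.colLen c.2 - 1) c.1 (le_of_lt hlt)
      have h2 := removables_rowLen hS hcolS
      simp only at h2
      -- rowLen (colLen c.2 - 1) = c.2 + 1
      have hcY' : c.2 < Y.rowLen c.1 := YoungDiagram.mem_iff_lt_rowLen.mp (by simpa using hcY)
      -- so rowLen c.1 ≤ c.2 + 1 and c.2 < rowLen c.1, so rowLen c.1 = c.2 + 1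
      have heq : Y.rowLen c.1 = c.2 + 1 := by omega
      -- then (c.1, rowLen c.1 - 1) = (c.1, c.2), and cols equal to hcolS's col
      have : (c.1, Y.rowLen c.1 - 1) = (Y.colLen c.2 - 1, c.2) := by
        apply removables_col_inj hS hrowS hcolS
        simp [heq]
      have := (Prod.ext_iff.mp this).1
      simp only at this
      omega
    · -- injective
      intro c1 h1 c2 h2 heq
      simp only [irrelevantCells, Finset.mem_filter] at h1 h2
      have hx : c1.1 = c2.1 := (Prod.ext_iff.mp heq).1
      have hy : Y.colLen c1.2 - 1 = Y.colLen c2.2 - 1 := (Prod.ext_iff.mp heq).2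
      have e1 := removables_colLen hS h1.2.1
      have e2 := removables_colLen hS h2.2.1
      simp only at e1 e2
      have : (Y.colLen c1.2 - 1, c1.2) = (Y.colLen c2.2 - 1, c2.2) := by
        apply removables_row_inj hS h1.2.1 h2.2.1
        simpa using hy
      have := (Prod.ext_iff.mp this).2
      exact Prod.ext hx this
    · -- surjective
      intro p hp
      simp only [hT, Finset.mem_filter, Finset.mem_product] at hp
      obtain ⟨⟨hp1, hp2⟩, hle⟩ := hp
      obtain ⟨s, hsS, hs1⟩ := hmemR hp1
      obtain ⟨t, htS, ht1⟩ := hmemR hp2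
      refine ⟨(p.1, t.2), ?_, ?_⟩
      · simp only [irrelevantCells, Finset.mem_filter]
        have hrowt := removables_rowLen hS htS
        have hrows := removables_rowLen hS hsS
        have hcolt := removables_colLen hS htS
        have hanti := Y.rowLen_anti p.1 p.2 hle
        rw [hs1] at hrows
        rw [ht1] at hrowt
        have hmem : (p.1, t.2) ∈ Y := by
          rw [YoungDiagram.mem_iff_lt_rowLen]
          omega
        refine ⟨hmem, ?_, ?_⟩
        · have h1 : Y.colLen t.2 - 1 = t.1 := by omega
          rw [h1, ht1]
          rw [← ht1]
          exact htS
        · have : Y.rowLen p.1 - 1 = s.2 := by omega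
          rw [this, ← hs1]
          exact hsS
      · have hcolt := removables_colLen hS htS
        simp only
        rw [show Y.colLen t.2 - 1 = t.1 by omega, ht1]
    -- done with bij
  rw [key]
  -- step 2: card T = m(m+1)/2 via sym2
  have : T.card = R.sym2.card := by
    apply Finset.card_bij (s := T) (t := R.sym2) (fun (p : ℕ × ℕ) _ => Sym2.mk p.1 p.2)
    · intro p hp
      simp only [hT, Finset.mem_filter, Finset.mem_product] at hp
      exact Finset.mk_mem_sym2_iff.mpr ⟨hp.1.1, hp.1.2⟩
    · intro p hp q hq heq
      simp only [hT, Finset.mem_filter, Finset.mem_product] at hp hq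
      rcases Sym2.mk_eq_mk_iff.mp heq with h | h
      · exact h
      · have h1 : p.1 = q.2 := congrArg Prod.fst h
        have h2 : p.2 = q.1 := congrArg Prod.snd h
        have : p.1 = q.1 := by omega
        exact Prod.ext this (by omega)
    · intro z hz
      induction z using Sym2.ind with
      | _ a b =>
        have hab := Finset.mk_mem_sym2_iff.mp hz
        rcases le_total a b with h | h
        · exact ⟨(a, b), by simp [hT, Finset.mem_filter, Finset.mem_product, hab.1, hab.2, h], rfl⟩
        · exact ⟨(b, a), by simp [hT, Finset.mem_filter, Finset.mem_product, hab.1, hab.2, h],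
            Sym2.eq_swap⟩
  rw [this, Finset.card_sym2, hRcard, Nat.choose_two_right]
  have h2 : (m + 1) * (m + 1 - 1) = m * (m + 1) := by
    simp [Nat.mul_comm]
  rw [h2]
end

section
/- Fix nonnegative integers m and N. There is a bijection between the set A of pairs (Y,S), where Y is a Young diagram, S is a set of m removable boxes of Y, and |Y| − m(m+1)/2 = N, and the set B of pairs (Y¹,Y²) of Young diagrams such that Y² has at most m columns and |Y¹| + |Y²| = N. The bijection sends (Y,S) to (Y¹,Y²) where Y¹ consists of the columns of Y not containing a marked box, and Y² is obtained from the remaining columns of Y by deleting from the i-th marked column (ordered by decreasing length) its top i boxes. -/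
open scoped Classical

namespace BijAux

/-- sup of a nonempty multiset of naturals is a member -/
lemma sup_mem_of_ne_zero {ν : Multiset ℕ} (h : ν ≠ 0) : ν.sup ∈ ν := by
  induction ν using Multiset.induction with
  | empty => simp at h
  | cons a s ih =>
    rcases eq_or_ne s 0 with rfl | hs
    · simp
    · rw [Multiset.sup_cons]
      rcases le_total s.sup a with hle | hle
      · rw [sup_eq_left.mpr hle]; exact Multiset.mem_cons_self _ _
      · rw [sup_eq_right.mpr hle]; exact Multiset.mem_cons_of_mem (ih hs)

lemma sup_erase_le (ν : Multiset ℕ) (a : ℕ) : (ν.erase a).sup ≤ ν.sup :=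
  Multiset.sup_le.mpr fun x hx => Multiset.le_sup (Multiset.mem_of_mem_erase hx)

/-- forward map: multiset (≤ m elements, positive) to finset of m distinct positives -/
noncomputable def mtf : ℕ → Multiset ℕ → Finset ℕ
  | 0, _ => ∅
  | (m+1), ν => insert (ν.sup + (m+1)) (mtf m (ν.erase ν.sup))

noncomputable def ftm : ℕ → Finset ℕ → Multiset ℕ
  | 0, _ => 0
  | (m+1), L =>
      (if L.sup id - (m+1) = 0 then 0 else {L.sup id - (m+1)}) +
        ftm m (L.erase (L.sup id))

lemma mtf_bound : ∀ (m : ℕ) (ν : Multiset ℕ), ∀ x ∈ mtf m ν, x ≤ ν.sup + m := by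
  intro m
  induction m with
  | zero => intro ν x hx; simp [mtf] at hx
  | succ m ih =>
    intro ν x hx
    rw [mtf, Finset.mem_insert] at hx
    rcases hx with rfl | hx
    · exact le_refl _
    · have := ih _ x hx
      have h2 := sup_erase_le ν ν.sup
      omega

lemma mtf_not_mem (m : ℕ) (ν : Multiset ℕ) : ν.sup + (m+1) ∉ mtf m (ν.erase ν.sup) := by
  intro h
  have := mtf_bound m _ _ h
  have h2 := sup_erase_le ν ν.sup
  omega

lemma mtf_pos (m : ℕ) (ν : Multiset ℕ) : 0 ∉ mtf m ν := by
  induction m generalizing ν with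
  | zero => simp [mtf]
  | succ m ih =>
    rw [mtf, Finset.mem_insert]
    rintro (h | h)
    · omega
    · exact ih _ h

lemma mtf_card (m : ℕ) (ν : Multiset ℕ) : (mtf m ν).card = m := by
  induction m generalizing ν with
  | zero => simp [mtf]
  | succ m ih =>
    rw [mtf, Finset.card_insert_of_notMem (mtf_not_mem m ν), ih]

lemma sup_add_erase {ν : Multiset ℕ} (h : 0 ∉ ν) :
    ν = (if ν.sup = 0 then 0 else {ν.sup}) + ν.erase ν.sup := by
  rcases eq_or_ne ν 0 with rfl | hne
  · simp
  · have hmem := sup_mem_of_ne_zero hne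
    have hpos : ν.sup ≠ 0 := fun h0 => h (h0 ▸ hmem)
    rw [if_neg hpos]
    exact ((Multiset.cons_erase hmem).symm).trans rfl

lemma gauss (m : ℕ) : m * (m+1) / 2 + (m+1) = (m+1) * (m+2) / 2 := by
  obtain ⟨c, hc⟩ := Nat.even_mul_succ_self m
  have h2 : (m+1) * (m+2) = m * (m+1) + 2 * (m+1) := by ring
  omega

lemma card_erase_sup_le {ν : Multiset ℕ} {m : ℕ} (h : Multiset.card ν ≤ m + 1) :
    Multiset.card (ν.erase ν.sup) ≤ m := by
  rcases eq_or_ne ν 0 with rfl | hne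
  · simp
  · rw [Multiset.card_erase_of_mem (sup_mem_of_ne_zero hne), Nat.pred_eq_sub_one]
    omega

lemma sum_eq_sup_add {ν : Multiset ℕ} (hne : ν ≠ 0) :
    ν.sum = ν.sup + (ν.erase ν.sup).sum := by
  conv_lhs => rw [← Multiset.cons_erase (sup_mem_of_ne_zero hne)]
  rw [Multiset.sum_cons]

lemma mtf_sum (m : ℕ) (ν : Multiset ℕ) (h : Multiset.card ν ≤ m) :
    ((mtf m ν).sum id) = ν.sum + m * (m+1) / 2 := by
  induction m generalizing ν with
  | zero =>
    have h0 : ν = 0 := by rw [← Multiset.card_eq_zero]; omega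
    subst h0; simp [mtf]
  | succ m ih =>
    rw [mtf, Finset.sum_insert (mtf_not_mem m ν), ih _ (card_erase_sup_le h)]
    have hg : (m+1) * (m+1+1) = (m+1)*(m+2) := by ring
    rw [hg]
    have hga := gauss m
    rcases eq_or_ne ν 0 with rfl | hne
    · have hs : (0:Multiset ℕ).sup = 0 := rfl
      simp only [hs, Multiset.erase_zero, Multiset.sum_zero, Multiset.card_zero, id]
      omega
    · rw [sum_eq_sup_add hne]
      simp only [id]
      omega

lemma ftm_pos (m : ℕ) (L : Finset ℕ) : 0 ∉ ftm m L := by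
  induction m generalizing L with
  | zero => simp [ftm]
  | succ m ih =>
    rw [ftm, Multiset.mem_add]
    rintro (h | h)
    · split at h
      · simp at h
      · rw [Multiset.mem_singleton] at h; omega
    · exact ih _ h

lemma ftm_card_le (m : ℕ) (L : Finset ℕ) : Multiset.card (ftm m L) ≤ m := by
  induction m generalizing L with
  | zero => simp [ftm]
  | succ m ih =>
    rw [ftm, Multiset.card_add]
    have := ih (L.erase (L.sup id))
    split <;> simp <;> omega

/-- a finset of m distinct positive naturals has sup ≥ m -/
lemma card_le_sup {L : Finset ℕ} (h : 0 ∉ L) : L.card ≤ L.sup id := by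
  have hsub : L ⊆ Finset.Icc 1 (L.sup id) := by
    intro x hx
    rw [Finset.mem_Icc]
    refine ⟨?_, Finset.le_sup (f := id) hx⟩
    rcases Nat.eq_zero_or_pos x with rfl | hp
    · exact absurd hx h
    · exact hp
  have := Finset.card_le_card hsub
  simpa using this

lemma ftm_bound (m : ℕ) (L : Finset ℕ) (hpos : 0 ∉ L) (hcard : L.card = m) :
    ∀ u, (∀ y ∈ L, y ≤ u) → ∀ x ∈ ftm m L, x + m ≤ u := by
  induction m generalizing L with
  | zero => intro u hu x hx; simp [ftm] at hx
  | succ m ih =>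
    intro u hu x hx
    have hne : L.Nonempty := by
      rw [← Finset.card_pos, hcard]; omega
    have hsupmem : L.sup id ∈ L := by
      obtain ⟨a, ha, he⟩ := Finset.exists_mem_eq_sup L hne id
      rw [he]; exact ha
    have hsup_ge : m + 1 ≤ L.sup id := hcard ▸ card_le_sup hpos
    rw [ftm, Multiset.mem_add] at hx
    rcases hx with hx | hx
    · split at hx
      · simp at hx
      · rw [Multiset.mem_singleton] at hx
        subst hx
        have := hu _ hsupmem
        omega
    · have hc : (L.erase (L.sup id)).card = m := by
        rw [Finset.card_erase_of_mem hsupmem, hcard]; omega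
      have hp : 0 ∉ L.erase (L.sup id) := fun hh => hpos (Finset.mem_of_mem_erase hh)
      have hb : ∀ y ∈ L.erase (L.sup id), y ≤ u - 1 := by
        intro y hy
        have h1 : y ≠ L.sup id := Finset.ne_of_mem_erase hy
        have h2 : y ≤ L.sup id := Finset.le_sup (f := id) (Finset.mem_of_mem_erase hy)
        have h3 := hu _ hsupmem
        omega
      have := ih _ hp hc (u-1) hb x hx
      have h3 := hu _ hsupmem
      omega

end BijAux

namespace BijAux

lemma ftm_mtf (m : ℕ) (ν : Multiset ℕ) (hpos : 0 ∉ ν) (hcard : Multiset.card ν ≤ m) :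
    ftm m (mtf m ν) = ν := by
  induction m generalizing ν with
  | zero =>
    have h0 : ν = 0 := by rw [← Multiset.card_eq_zero]; omega
    subst h0; simp [ftm]
  | succ m ih =>
    set s := ν.sup with hs
    set R := mtf m (ν.erase s) with hR
    have hRb : ∀ x ∈ R, x ≤ s + m := by
      intro x hx
      have := mtf_bound m _ x hx
      have := sup_erase_le ν s
      omega
    have hsup : (insert (s + (m+1)) R).sup id = s + (m+1) := by
      rw [Finset.sup_insert]
      have : R.sup id ≤ s + m := Finset.sup_le fun x hx => hRb x hx
      simp only [id]
      omega
    have hnm : s + (m+1) ∉ R := mtf_not_mem m ν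
    rw [mtf, ftm, hsup, Finset.erase_insert hnm]
    have hz : s + (m+1) - (m+1) = s := by omega
    rw [hz, hR, ih _ (fun hh => hpos (Multiset.mem_of_mem_erase hh)) (card_erase_sup_le hcard)]
    exact (sup_add_erase hpos).symm

lemma mtf_ftm (m : ℕ) (L : Finset ℕ) (hpos : 0 ∉ L) (hcard : L.card = m) :
    mtf m (ftm m L) = L := by
  induction m generalizing L with
  | zero =>
    have h0 : L = ∅ := Finset.card_eq_zero.mp hcard
    subst h0; simp [mtf]
  | succ m ih =>
    have hne : L.Nonempty := by rw [← Finset.card_pos, hcard]; omega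
    have hsupmem : L.sup id ∈ L := by
      obtain ⟨a, ha, he⟩ := Finset.exists_mem_eq_sup L hne id
      rw [he]; exact ha
    set a := L.sup id with ha
    have hage : m + 1 ≤ a := hcard ▸ card_le_sup hpos
    set L' := L.erase a with hL'
    have hc : L'.card = m := by rw [hL', Finset.card_erase_of_mem hsupmem, hcard]; omega
    have hp : 0 ∉ L' := fun hh => hpos (Finset.mem_of_mem_erase hh)
    set ν' := ftm m L' with hν'
    set b := a - (m+1) with hb
    have claim1 : ∀ x ∈ ν', x ≤ b := by
      intro x hx
      have hbnd : ∀ y ∈ L', y ≤ a - 1 := by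
        intro y hy
        have h1 : y ≠ a := Finset.ne_of_mem_erase hy
        have h2 : y ≤ a := Finset.le_sup (f := id) (Finset.mem_of_mem_erase hy)
        omega
      have := ftm_bound m L' hp hc (a-1) hbnd x hx
      omega
    set ν : Multiset ℕ := (if b = 0 then 0 else {b}) + ν' with hν
    have hzero : b = 0 → ν' = 0 := by
      intro h0
      by_contra hne'
      obtain ⟨x, hx⟩ := Multiset.exists_mem_of_ne_zero hne'
      have := claim1 x hx
      have := ftm_pos m L'
      have : x ≠ 0 := fun hh => (ftm_pos m L') (hh ▸ hx)
      omega
    have claim2 : ν.sup = b := by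
      rcases eq_or_ne b 0 with h0 | h0
      · rw [hν, if_pos h0, hzero h0]; simp [h0]
      · rw [hν, if_neg h0, Multiset.singleton_add, Multiset.sup_cons]
        have : ν'.sup ≤ b := Multiset.sup_le.mpr claim1
        exact sup_eq_left.mpr this
    have claim3 : ν.erase b = ν' := by
      rcases eq_or_ne b 0 with h0 | h0
      · rw [hν, if_pos h0, hzero h0]; simp
      · rw [hν, if_neg h0, Multiset.singleton_add, Multiset.erase_cons_head]
    have : ftm (m+1) L = ν := by
      rw [ftm, ← ha, ← hb, ← hL', ← hν', hν]
    rw [this, mtf, claim2, claim3, hν', ih _ hp hc]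
    · have hba : b + (m+1) = a := by omega
      rw [hba, hL', Finset.insert_erase hsupmem]

end BijAux

namespace BijAux

/-! ### Young diagrams as multisets of row lengths -/

noncomputable def toMu (Y : YoungDiagram) : Multiset ℕ := (Y.rowLens : Multiset ℕ)

lemma toMu_pos (Y : YoungDiagram) : 0 ∉ toMu Y := by
  intro h
  have := Y.pos_of_mem_rowLens 0 (by exact_mod_cast h)
  omega

lemma toMu_card (Y : YoungDiagram) : Multiset.card (toMu Y) = Y.colLen 0 := by
  simp [toMu, YoungDiagram.length_rowLens]

lemma mem_toMu {Y : YoungDiagram} {ℓ : ℕ} : ℓ ∈ toMu Y ↔ 0 < ℓ ∧ ∃ i, Y.rowLen i = ℓ := by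
  constructor
  · intro h
    have hl : ℓ ∈ Y.rowLens := by exact_mod_cast h
    refine ⟨Y.pos_of_mem_rowLens ℓ hl, ?_⟩
    rw [YoungDiagram.rowLens, List.mem_map] at hl
    obtain ⟨i, _, hi⟩ := hl
    exact ⟨i, hi⟩
  · rintro ⟨hpos, i, hi⟩
    have hmem : (i, 0) ∈ Y := by rw [YoungDiagram.mem_iff_lt_rowLen]; omega
    have hlt : i < Y.colLen 0 := YoungDiagram.mem_iff_lt_colLen.mp hmem
    have : ℓ ∈ Y.rowLens := by
      rw [YoungDiagram.rowLens, List.mem_map]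
      exact ⟨i, List.mem_range.mpr hlt, hi⟩
    exact_mod_cast this

lemma toMu_sum (Y : YoungDiagram) : (toMu Y).sum = Y.card := by
  have hcells : Y.cells = (Finset.range (Y.colLen 0)).biUnion (fun i => Y.row i) := by
    ext ⟨i, j⟩
    simp only [Finset.mem_biUnion, Finset.mem_range, YoungDiagram.mem_row_iff,
      YoungDiagram.mem_cells]
    constructor
    · intro hc
      refine ⟨i, ?_, hc, rfl⟩
      rw [← YoungDiagram.mem_iff_lt_colLen]
      exact Y.up_left_mem le_rfl (Nat.zero_le _) hc
    · rintro ⟨k, _, hc, _⟩; exact hc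
  have hdisj : ∀ x ∈ Finset.range (Y.colLen 0), ∀ y ∈ Finset.range (Y.colLen 0),
      x ≠ y → Disjoint (Y.row x) (Y.row y) := by
    intro x _ y _ hxy
    rw [Finset.disjoint_left]
    intro c hcx hcy
    rw [YoungDiagram.mem_row_iff] at hcx hcy
    exact hxy (hcx.2 ▸ hcy.2 ▸ rfl)
  have : Y.card = ∑ i ∈ Finset.range (Y.colLen 0), Y.rowLen i := by
    rw [YoungDiagram.card, hcells, Finset.card_biUnion hdisj]
    exact Finset.sum_congr rfl fun i _ => (Y.rowLen_eq_card).symm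
  rw [this, toMu, YoungDiagram.rowLens]
  simp [Finset.sum, Finset.range, Multiset.range]

lemma rowLens_injective {Y₁ Y₂ : YoungDiagram} (h : Y₁.rowLens = Y₂.rowLens) : Y₁ = Y₂ := by
  have := congrArg YoungDiagram.equivListRowLens.symm
    (Subtype.ext h : YoungDiagram.equivListRowLens Y₁ = YoungDiagram.equivListRowLens Y₂)
  simpa using this

noncomputable def muEquiv : YoungDiagram ≃ {μ : Multiset ℕ // 0 ∉ μ} where
  toFun Y := ⟨toMu Y, toMu_pos Y⟩
  invFun μ := YoungDiagram.ofRowLens (μ.1.sort (· ≥ ·)) (List.sortedGE_iff_pairwise.mpr (Multiset.pairwise_sort _ _))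
  left_inv Y := by
    have hsort : Multiset.sort (toMu Y) (· ≥ ·) = Y.rowLens := by
      have hperm : List.Perm (Multiset.sort (toMu Y) (· ≥ ·)) Y.rowLens := by
        rw [← Multiset.coe_eq_coe, Multiset.sort_eq]; rfl
      exact hperm.eq_of_pairwise' (Multiset.pairwise_sort _ _) (List.sortedGE_iff_pairwise.mp Y.rowLens_sorted)
    apply rowLens_injective
    rw [YoungDiagram.rowLens_ofRowLens_eq_self, hsort]
    intro x hx
    rcases Nat.eq_zero_or_pos x with rfl | hp
    · exact absurd (by rwa [Multiset.mem_sort] at hx) (toMu_pos Y)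
    · exact hp
  right_inv := by
    rintro ⟨μ, hμ⟩
    apply Subtype.ext
    have hpos : ∀ x ∈ Multiset.sort μ (· ≥ ·), 0 < x := by
      intro x hx
      rw [Multiset.mem_sort] at hx
      rcases Nat.eq_zero_or_pos x with rfl | hp
      · exact absurd hx hμ
      · exact hp
    show toMu _ = μ
    rw [toMu, YoungDiagram.rowLens_ofRowLens_eq_self hpos, Multiset.sort_eq]

lemma muEquiv_symm_toMu {μ : Multiset ℕ} (h : 0 ∉ μ) : toMu (muEquiv.symm ⟨μ, h⟩) = μ :=
  congrArg Subtype.val (muEquiv.apply_symm_apply ⟨μ, h⟩)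

end BijAux

namespace BijAux

lemma mem_removables {Y : YoungDiagram} {c : ℕ × ℕ} :
    c ∈ Y.removables ↔ (c.1, c.2) ∈ Y ∧ (c.1 + 1, c.2) ∉ Y ∧ (c.1, c.2 + 1) ∉ Y := by
  rw [YoungDiagram.removables, Finset.mem_filter, YoungDiagram.mem_cells]

lemma removable_lens {Y : YoungDiagram} {c : ℕ × ℕ} (h : c ∈ Y.removables) :
    Y.colLen c.2 = c.1 + 1 ∧ Y.rowLen c.1 = c.2 + 1 := by
  rw [mem_removables] at h
  obtain ⟨h1, h2, h3⟩ := h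
  rw [YoungDiagram.mem_iff_lt_colLen] at h2
  rw [YoungDiagram.mem_iff_lt_rowLen] at h3
  have h4 := YoungDiagram.mem_iff_lt_colLen.mp h1
  have h5 := YoungDiagram.mem_iff_lt_rowLen.mp h1
  omega

lemma removable_mem_toMu {Y : YoungDiagram} {c : ℕ × ℕ} (h : c ∈ Y.removables) :
    c.2 + 1 ∈ toMu Y :=
  mem_toMu.mpr ⟨Nat.succ_pos _, c.1, (removable_lens h).2⟩

/-- inverse: the removable box associated to a length `ℓ` present in `Y` -/
lemma removable_of_mem_toMu {Y : YoungDiagram} {ℓ : ℕ} (h : ℓ ∈ toMu Y) :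
    (Y.colLen (ℓ-1) - 1, ℓ-1) ∈ Y.removables := by
  obtain ⟨hpos, i, hi⟩ := mem_toMu.mp h
  have hmem : (i, ℓ-1) ∈ Y := by rw [YoungDiagram.mem_iff_lt_rowLen]; omega
  have hik : i < Y.colLen (ℓ-1) := YoungDiagram.mem_iff_lt_colLen.mp hmem
  rw [mem_removables]
  dsimp only
  refine ⟨?_, ?_, ?_⟩
  · rw [YoungDiagram.mem_iff_lt_colLen]; omega
  · rw [YoungDiagram.mem_iff_lt_colLen]; omega
  · rw [YoungDiagram.mem_iff_lt_rowLen]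
    have hanti : Y.rowLen (Y.colLen (ℓ-1) - 1) ≤ Y.rowLen i :=
      Y.rowLen_anti i _ (by omega)
    omega

lemma removable_roundtrip {Y : YoungDiagram} {c : ℕ × ℕ} (h : c ∈ Y.removables) :
    (Y.colLen ((c.2+1)-1) - 1, (c.2+1)-1) = c := by
  obtain ⟨h1, _⟩ := removable_lens h
  have : (c.2+1)-1 = c.2 := rfl
  rw [this, h1]
  simp

end BijAux

namespace BijAux

lemma fsum (L : Finset ℕ) : L.sum id = L.val.sum := by
  rw [Finset.sum, Multiset.map_id]

lemma mem_toMu_pos {Y : YoungDiagram} {ℓ : ℕ} (h : ℓ ∈ toMu Y) : 0 < ℓ :=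
  (mem_toMu.mp h).1

noncomputable def e1 (m N : ℕ) :
    {p : YoungDiagram × Finset (ℕ × ℕ) //
        p.2 ⊆ p.1.removables ∧ p.2.card = m ∧ p.1.card = N + m * (m + 1) / 2} ≃
    {p : YoungDiagram × Finset ℕ //
        p.2.val ≤ toMu p.1 ∧ p.2.card = m ∧ p.1.card = N + m * (m + 1) / 2} where
  toFun p :=
    ⟨(p.1.1, p.1.2.image (fun c => c.2 + 1)), by
      obtain ⟨hS, hc, hY⟩ := p.2
      refine ⟨?_, ?_, hY⟩
      · rw [Multiset.le_iff_subset (Finset.nodup _)]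
        intro x hx
        rw [Finset.mem_val, Finset.mem_image] at hx
        obtain ⟨c, hcS, rfl⟩ := hx
        exact removable_mem_toMu (hS hcS)
      · rw [Finset.card_image_of_injOn, hc]
        intro c hcS c' hcS' he
        have h1 := removable_roundtrip (hS hcS)
        have h2 := removable_roundtrip (hS hcS')
        simp only at he
        rw [← h1, ← h2, he]⟩
  invFun p :=
    ⟨(p.1.1, p.1.2.image (fun ℓ => (p.1.1.colLen (ℓ-1) - 1, ℓ-1))), by
      obtain ⟨hL, hc, hY⟩ := p.2
      refine ⟨?_, ?_, hY⟩
      · intro c hc'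
        rw [Finset.mem_image] at hc'
        obtain ⟨ℓ, hℓ, rfl⟩ := hc'
        exact removable_of_mem_toMu (Multiset.mem_of_le hL hℓ)
      · rw [Finset.card_image_of_injOn, hc]
        intro x hx y hy he
        have hx' := mem_toMu_pos (Multiset.mem_of_le hL hx)
        have hy' := mem_toMu_pos (Multiset.mem_of_le hL hy)
        have := congrArg Prod.snd he
        simp only at this
        omega⟩
  left_inv p := by
    apply Subtype.ext
    obtain ⟨⟨Y, S⟩, hS, hc, hY⟩ := p
    simp only [Prod.mk.injEq]
    refine ⟨trivial, ?_⟩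
    rw [Finset.image_image]
    refine Finset.image_congr ?_ |>.trans (Finset.image_id)
    intro c hcS
    exact removable_roundtrip (hS hcS)
  right_inv p := by
    apply Subtype.ext
    obtain ⟨⟨Y, L⟩, hL, hc, hY⟩ := p
    simp only [Prod.mk.injEq]
    refine ⟨trivial, ?_⟩
    rw [Finset.image_image]
    refine Finset.image_congr ?_ |>.trans (Finset.image_id)
    intro ℓ hℓ
    have := mem_toMu_pos (Multiset.mem_of_le hL hℓ)
    simp only [Function.comp, id_eq]
    omega

noncomputable def e2 (m N : ℕ) :
    {p : YoungDiagram × Finset ℕ //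
        p.2.val ≤ toMu p.1 ∧ p.2.card = m ∧ p.1.card = N + m * (m + 1) / 2} ≃
    {q : Multiset ℕ × Finset ℕ //
        0 ∉ q.1 ∧ 0 ∉ q.2 ∧ q.2.card = m ∧ q.1.sum + q.2.val.sum = N + m * (m + 1) / 2} where
  toFun p :=
    ⟨(toMu p.1.1 - p.1.2.val, p.1.2), by
      obtain ⟨hL, hc, hY⟩ := p.2
      refine ⟨?_, ?_, hc, ?_⟩
      · intro h
        exact toMu_pos p.1.1 (Multiset.mem_of_le (tsub_le_self) h)
      · intro h
        exact toMu_pos p.1.1 (Multiset.mem_of_le hL h)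
      · have := tsub_add_cancel_of_le hL
        calc (toMu p.1.1 - p.1.2.val).sum + p.1.2.val.sum
            = ((toMu p.1.1 - p.1.2.val) + p.1.2.val).sum := (Multiset.sum_add _ _).symm
          _ = (toMu p.1.1).sum := by rw [this]
          _ = N + m * (m + 1) / 2 := by rw [toMu_sum, hY]⟩
  invFun q :=
    ⟨(muEquiv.symm ⟨q.1.1 + q.1.2.val, by
        obtain ⟨h1, h2, _, _⟩ := q.2
        rw [Multiset.mem_add]
        rintro (h | h)
        · exact h1 h
        · exact h2 h⟩, q.1.2), by
      obtain ⟨h1, h2, hc, hs⟩ := q.2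
      refine ⟨?_, hc, ?_⟩
      · rw [muEquiv_symm_toMu]
        exact le_add_self
      · rw [← toMu_sum, muEquiv_symm_toMu, Multiset.sum_add, hs]⟩
  left_inv p := by
    apply Subtype.ext
    obtain ⟨⟨Y, L⟩, hL, hc, hY⟩ := p
    simp only [Prod.mk.injEq]
    refine ⟨?_, trivial⟩
    have hval : toMu Y - L.val + L.val = toMu Y := tsub_add_cancel_of_le hL
    rw [Equiv.symm_apply_eq]
    exact Subtype.ext hval
  right_inv q := by
    apply Subtype.ext
    obtain ⟨⟨μ, L⟩, h1, h2, hc, hs⟩ := q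
    simp only [Prod.mk.injEq]
    refine ⟨?_, trivial⟩
    rw [muEquiv_symm_toMu, add_tsub_cancel_right]

noncomputable def e3 (m N : ℕ) :
    {q : Multiset ℕ × Finset ℕ //
        0 ∉ q.1 ∧ 0 ∉ q.2 ∧ q.2.card = m ∧ q.1.sum + q.2.val.sum = N + m * (m + 1) / 2} ≃
    {q : Multiset ℕ × Multiset ℕ //
        0 ∉ q.1 ∧ 0 ∉ q.2 ∧ Multiset.card q.2 ≤ m ∧ q.1.sum + q.2.sum = N} where
  toFun q :=
    ⟨(q.1.1, ftm m q.1.2), by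
      obtain ⟨h1, h2, hc, hs⟩ := q.2
      dsimp only
      refine ⟨h1, ftm_pos m _, ftm_card_le m _, ?_⟩
      have hmf := mtf_ftm m q.1.2 h2 hc
      have hsum := mtf_sum m (ftm m q.1.2) (ftm_card_le m _)
      rw [hmf, fsum] at hsum
      omega⟩
  invFun q :=
    ⟨(q.1.1, mtf m q.1.2), by
      obtain ⟨h1, h2, hc, hs⟩ := q.2
      dsimp only
      refine ⟨h1, mtf_pos m _, mtf_card m _, ?_⟩
      have hsum := mtf_sum m q.1.2 hc
      rw [fsum] at hsum
      omega⟩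
  left_inv q := by
    apply Subtype.ext
    obtain ⟨⟨μ, L⟩, h1, h2, hc, hs⟩ := q
    simp only [Prod.mk.injEq]
    exact ⟨trivial, mtf_ftm m L h2 hc⟩
  right_inv q := by
    apply Subtype.ext
    obtain ⟨⟨μ, ν⟩, h1, h2, hc, hs⟩ := q
    simp only [Prod.mk.injEq]
    exact ⟨trivial, ftm_mtf m ν h2 hc⟩

noncomputable def e4 (m N : ℕ) :
    {q : Multiset ℕ × Multiset ℕ //
        0 ∉ q.1 ∧ 0 ∉ q.2 ∧ Multiset.card q.2 ≤ m ∧ q.1.sum + q.2.sum = N} ≃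
    {p : YoungDiagram × YoungDiagram // p.2.colLen 0 ≤ m ∧ p.1.card + p.2.card = N} where
  toFun q :=
    ⟨(muEquiv.symm ⟨q.1.1, q.2.1⟩, muEquiv.symm ⟨q.1.2, q.2.2.1⟩), by
      obtain ⟨h1, h2, hc, hs⟩ := q.2
      constructor
      · rw [← toMu_card, muEquiv_symm_toMu]
        exact hc
      · rw [← toMu_sum, ← toMu_sum, muEquiv_symm_toMu, muEquiv_symm_toMu]
        exact hs⟩
  invFun p :=
    ⟨(toMu p.1.1, toMu p.1.2), toMu_pos _, toMu_pos _, by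
      rw [toMu_card]; exact p.2.1, by
      rw [toMu_sum, toMu_sum]; exact p.2.2⟩
  left_inv q := by
    apply Subtype.ext
    obtain ⟨⟨μ, ν⟩, h1, h2, hc, hs⟩ := q
    simp only [Prod.mk.injEq]
    exact ⟨muEquiv_symm_toMu _, muEquiv_symm_toMu _⟩
  right_inv p := by
    apply Subtype.ext
    obtain ⟨⟨Y1, Y2⟩, h1, h2⟩ := p
    simp only [Prod.mk.injEq]
    constructor
    · rw [Equiv.symm_apply_eq]
      exact Subtype.ext rfl
    · rw [Equiv.symm_apply_eq]
      exact Subtype.ext rfl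

end BijAux

/-- There is a bijection between the set `A` of pairs `(Y,S)` of a Young diagram `Y`
together with a set `S` of `m` removable boxes of `Y` with `|Y| - m(m+1)/2 = N`,
and the set `B` of pairs `(Y¹,Y²)` of Young diagrams such that `Y²` has at most `m`
columns and `|Y¹| + |Y²| = N`. -/
theorem bijection_marked_diagrams_pairs (m N : ℕ) :
    Nonempty
      ({p : YoungDiagram × Finset (ℕ × ℕ) //
          p.2 ⊆ p.1.removables ∧ p.2.card = m ∧ p.1.card = N + m * (m + 1) / 2} ≃
        {p : YoungDiagram × YoungDiagram //
          p.2.colLen 0 ≤ m ∧ p.1.card + p.2.card = N}) :=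
  ⟨((BijAux.e1 m N).trans (BijAux.e2 m N) |>.trans (BijAux.e3 m N) |>.trans (BijAux.e4 m N))⟩
end

section
/- For every m ≥ 0 and N ≥ 0, the sum of t^{2(|Y| + m − m(m+1)/2 − l(Y))} over all pairs (Y,S) with Y a Young diagram, S a set of m removable boxes of Y and |Y| = N + m(m+1)/2, equals the sum of t^{2(|Y¹| + |Y²| − l(Y¹))} over all pairs of Young diagrams (Y¹,Y²) with |Y¹| + |Y²| = N and Y² having at most m columns. -/
open scoped Classical

namespace YDAux
open YoungDiagram

theorem sum_range_getD (w : List ℕ) : ∑ i ∈ Finset.range w.length, w.getD i 0 = w.sum := by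
  induction w using List.reverseRecOn with
  | nil => simp
  | append_singleton l a ih =>
    rw [List.length_append, List.length_singleton, Finset.sum_range_succ, List.sum_append]
    simp only [List.sum_singleton]
    rw [List.getD_eq_getElem _ _ (by simp)]
    rw [show ((l ++ [a])[l.length]'(by simp) = a) from List.getElem_concat_length rfl _]
    congr 1
    rw [← ih]
    refine Finset.sum_congr rfl fun i hi => ?_
    rw [Finset.mem_range] at hi
    rw [List.getD_eq_getElem _ _ (by simp; omega), List.getD_eq_getElem _ _ hi,
      List.getElem_append_left]

/-- multiset of row lengths -/
noncomputable def rm (Y : YoungDiagram) : Multiset ℕ := (Y.rowLens : Multiset ℕ)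

noncomputable def ofM (M : Multiset ℕ) : YoungDiagram :=
  YoungDiagram.ofRowLens (M.sort (· ≥ ·)) (Multiset.pairwise_sort _ _).sortedGE

lemma ofRowLens_congr {w w' : List ℕ} (h : w = w') (hw : List.SortedGE w)
    (hw' : List.SortedGE w') :
    YoungDiagram.ofRowLens w hw = YoungDiagram.ofRowLens w' hw' := by subst h; rfl

lemma rowLen_pos_iff {Y : YoungDiagram} {i : ℕ} : 0 < Y.rowLen i ↔ i < Y.colLen 0 := by
  rw [← mem_iff_lt_rowLen, mem_iff_lt_colLen]

lemma mem_rm {Y : YoungDiagram} {v : ℕ} : v ∈ rm Y ↔ 0 < v ∧ ∃ i, Y.rowLen i = v := by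
  constructor
  · intro hv
    refine ⟨Y.pos_of_mem_rowLens v hv, ?_⟩
    rw [rm, Multiset.mem_coe, rowLens, List.mem_map] at hv
    obtain ⟨i, _, h⟩ := hv
    exact ⟨i, h⟩
  · rintro ⟨hv, i, rfl⟩
    rw [rm, Multiset.mem_coe, rowLens, List.mem_map]
    exact ⟨i, by rwa [List.mem_range, ← rowLen_pos_iff], rfl⟩

lemma ofM_rm (Y : YoungDiagram) : ofM (rm Y) = Y := by
  have h : (rm Y).sort (· ≥ ·) = Y.rowLens := by
    refine List.Perm.eq_of_sortedGE (Multiset.pairwise_sort _ _).sortedGE Y.rowLens_sorted ?_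
    rw [← Multiset.coe_eq_coe, Multiset.sort_eq]; rfl
  exact (ofRowLens_congr h _ Y.rowLens_sorted).trans Y.ofRowLens_to_rowLens_eq_self

lemma rm_ofM {M : Multiset ℕ} (h : ∀ x ∈ M, 0 < x) : rm (ofM M) = M := by
  rw [rm, ofM, rowLens_ofRowLens_eq_self, Multiset.sort_eq]
  intro x hx
  exact h x ((Multiset.mem_sort _).1 hx)

lemma ofM_inj {M M' : Multiset ℕ} (h : ∀ x ∈ M, 0 < x) (h' : ∀ x ∈ M', 0 < x)
    (he : ofM M = ofM M') : M = M' := by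
  rw [← rm_ofM h, ← rm_ofM h', he]

lemma card_rm (Y : YoungDiagram) : Multiset.card (rm Y) = Y.colLen 0 := by
  simpa [rm] using Y.length_rowLens

lemma rowLen_ofRowLens' (w : List ℕ) (hw : List.SortedGE w) (i : ℕ) :
    (YoungDiagram.ofRowLens w hw).rowLen i = w.getD i 0 := by
  rcases lt_or_ge i w.length with h | h
  · rw [List.getD_eq_getElem _ _ h]
    simpa using YoungDiagram.rowLen_ofRowLens (hw := hw) ⟨i, h⟩
  · rw [List.getD_eq_default _ _ h]
    by_contra hne
    have : (i, 0) ∈ YoungDiagram.ofRowLens w hw := by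
      rw [mem_iff_lt_rowLen]; omega
    rw [YoungDiagram.mem_ofRowLens] at this
    obtain ⟨h1, _⟩ := this; omega

lemma card_ofRowLens (w : List ℕ) (hw : List.SortedGE w) :
    (YoungDiagram.ofRowLens w hw).card = w.sum := by
  classical
  have hcells : (YoungDiagram.ofRowLens w hw).cells =
      (Finset.range w.length).biUnion (fun i => {i} ×ˢ Finset.range (w.getD i 0)) := by
    ext ⟨i, j⟩
    simp only [YoungDiagram.mem_cells, YoungDiagram.mem_ofRowLens, Finset.mem_biUnion,
      Finset.mem_range, Finset.mem_product, Finset.mem_singleton]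
    constructor
    · rintro ⟨h1, h2⟩; exact ⟨i, h1, rfl, by rwa [List.getD_eq_getElem _ _ h1]⟩
    · rintro ⟨k, hk, rfl, hj⟩; exact ⟨hk, by rwa [List.getD_eq_getElem _ _ hk] at hj⟩
  rw [YoungDiagram.card, hcells, Finset.card_biUnion]
  · have h2 : ∀ i ∈ Finset.range w.length,
        ({i} ×ˢ Finset.range (w.getD i 0)).card = w.getD i 0 := by intro i _; simp
    rw [Finset.sum_congr rfl h2, sum_range_getD]
  · intro x _ y _ hxy
    simp only [Finset.disjoint_left, Finset.mem_product, Finset.mem_singleton]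
    rintro ⟨a, b⟩ ⟨rfl, _⟩ ⟨h, _⟩
    exact hxy h

lemma card_eq_sum_rm (Y : YoungDiagram) : Y.card = (rm Y).sum := by
  conv_lhs => rw [← Y.ofRowLens_to_rowLens_eq_self]
  rw [card_ofRowLens]; rfl

lemma colLen_le_card (Y : YoungDiagram) : Y.colLen 0 ≤ Y.card := by
  rw [Y.colLen_eq_card]
  exact Finset.card_le_card (fun c hc => (Finset.mem_filter.1 hc).1)

lemma mem_removables {Y : YoungDiagram} {c : ℕ × ℕ} :
    c ∈ Y.removables ↔ Y.rowLen c.1 = c.2 + 1 ∧ Y.rowLen (c.1 + 1) ≤ c.2 := by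
  obtain ⟨i, j⟩ := c
  simp only [YoungDiagram.removables, Finset.mem_filter, YoungDiagram.mem_cells,
    mem_iff_lt_rowLen, not_lt]
  omega

lemma removables_snd_injOn {Y : YoungDiagram} {c c' : ℕ × ℕ} (hc : c ∈ Y.removables)
    (hc' : c' ∈ Y.removables) (h : c.2 = c'.2) : c = c' := by
  rw [mem_removables] at hc hc'
  obtain ⟨i, j⟩ := c; obtain ⟨i', j'⟩ := c'
  simp only at h hc hc' ⊢
  subst h
  rcases lt_trichotomy i i' with hlt | rfl | hlt
  · have := Y.rowLen_anti (i + 1) i' hlt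
    omega
  · rfl
  · have := Y.rowLen_anti (i' + 1) i hlt
    omega

lemma exists_removable_of_mem_rm {Y : YoungDiagram} {v : ℕ} (hv : v ∈ rm Y) :
    ∃ i, (i, v - 1) ∈ Y.removables := by
  rw [mem_rm] at hv
  obtain ⟨hpos, i₀, hi₀⟩ := hv
  have hex : ∃ k, Y.rowLen k < v := by
    refine ⟨Y.colLen 0, ?_⟩
    have : ¬ (0 < Y.rowLen (Y.colLen 0)) := by rw [rowLen_pos_iff]; omega
    omega
  classical
  let k := Nat.find hex
  have hk : Y.rowLen k < v := Nat.find_spec hex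
  have hkpos : 0 < k := by
    rcases Nat.eq_zero_or_pos k with h0 | h; swap; · exact h
    exfalso
    have := Y.rowLen_anti 0 i₀ (Nat.zero_le _)
    rw [h0] at hk
    omega
  have hi₀k : i₀ < k := by
    by_contra hle
    push_neg at hle
    have := Y.rowLen_anti k i₀ hle
    omega
  have hprev : v ≤ Y.rowLen (k - 1) := by
    have := Nat.find_min hex (m := k - 1) (by omega)
    omega
  have hle' : Y.rowLen (k - 1) ≤ Y.rowLen i₀ := Y.rowLen_anti i₀ (k-1) (by omega)
  refine ⟨k - 1, ?_⟩
  rw [mem_removables]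
  constructor
  · simp only; omega
  · simp only
    have : k - 1 + 1 = k := by omega
    rw [this]; omega


lemma rm_sum (Y : YoungDiagram) : (rm Y).sum = Y.rowLens.sum := rfl


lemma sum_le_sum_of_le {s t : Multiset ℕ} (h : s ≤ t) : s.sum ≤ t.sum := by
  have := tsub_add_cancel_of_le h
  calc s.sum ≤ (t - s).sum + s.sum := Nat.le_add_left _ _
    _ = t.sum := by rw [← Multiset.sum_add, this]

lemma eq_of_rowLen_eq {Y Y' : YoungDiagram} (h : ∀ i, Y.rowLen i = Y'.rowLen i) : Y = Y' := by
  apply YoungDiagram.ext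
  ext ⟨i, j⟩
  simp only [YoungDiagram.mem_cells] at *
  rw [mem_iff_lt_rowLen, mem_iff_lt_rowLen, h]

lemma rowLen_eq_zero_of_colLen_le {Y : YoungDiagram} {m i : ℕ} (h : Y.colLen 0 ≤ m)
    (hi : m ≤ i) : Y.rowLen i = 0 := by
  have := (rowLen_pos_iff (Y := Y) (i := i))
  omega

/-- the set of marked values attached to `Y²` -/
noncomputable def Tset (m : ℕ) (Y₂ : YoungDiagram) : Finset ℕ :=
  Finset.image (fun k => Y₂.rowLen k + (m - k)) (Finset.range m)

lemma Tset_strictAnti (m : ℕ) (Y₂ : YoungDiagram) {k k' : ℕ} (h : k < k') (h' : k' < m) :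
    Y₂.rowLen k' + (m - k') < Y₂.rowLen k + (m - k) := by
  have := Y₂.rowLen_anti k k' h.le
  omega

lemma Tset_injOn (m : ℕ) (Y₂ : YoungDiagram) :
    Set.InjOn (fun k => Y₂.rowLen k + (m - k)) (Finset.range m) := by
  intro a ha b hb hab
  simp only [Finset.coe_range, Set.mem_Iio] at ha hb
  have hab' : Y₂.rowLen a + (m - a) = Y₂.rowLen b + (m - b) := hab
  by_contra hne
  rcases Nat.lt_or_ge a b with h | h
  · have := Tset_strictAnti m Y₂ h hb; omega
  · have hba : b < a := by omega
    have := Tset_strictAnti m Y₂ hba ha; omega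

lemma card_Tset (m : ℕ) (Y₂ : YoungDiagram) : (Tset m Y₂).card = m := by
  rw [Tset, Finset.card_image_of_injOn (Tset_injOn m Y₂), Finset.card_range]

lemma pos_of_mem_Tset {m : ℕ} {Y₂ : YoungDiagram} {v : ℕ} (h : v ∈ Tset m Y₂) : 0 < v := by
  simp only [Tset, Finset.mem_image, Finset.mem_range] at h
  obtain ⟨k, hk, rfl⟩ := h
  omega

lemma card_eq_sum_range {Y₂ : YoungDiagram} {m : ℕ} (h : Y₂.colLen 0 ≤ m) :
    Y₂.card = ∑ k ∈ Finset.range m, Y₂.rowLen k := by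
  have h1 : Y₂.card = ∑ k ∈ Finset.range (Y₂.colLen 0), Y₂.rowLen k := by
    rw [card_eq_sum_rm]
    rw [rm_sum, ← sum_range_getD, Y₂.length_rowLens]
    refine Finset.sum_congr rfl fun i hi => ?_
    rw [Finset.mem_range] at hi
    rw [List.getD_eq_getElem _ _ (by rwa [Y₂.length_rowLens]), get_rowLens]
  rw [h1]
  apply Finset.sum_subset
  · exact Finset.range_subset_range.2 h
  · intro i _ hi
    rw [Finset.mem_range] at hi
    exact rowLen_eq_zero_of_colLen_le (le_refl _) (by omega)

lemma staircase_sum (m : ℕ) : ∑ k ∈ Finset.range m, (m - k) = m * (m + 1) / 2 := by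
  have h1 : ∑ k ∈ Finset.range m, (m - k) = ∑ k ∈ Finset.range m, ((m - 1 - k) + 1) := by
    refine Finset.sum_congr rfl fun k hk => ?_
    rw [Finset.mem_range] at hk; omega
  rw [h1, Finset.sum_range_reflect (fun j => j + 1) m]
  have h2 : ∑ k ∈ Finset.range (m + 1), k = ∑ k ∈ Finset.range m, (k + 1) + 0 :=
    Finset.sum_range_succ' id m
  rw [Finset.sum_range_id] at h2
  have h3 : m + 1 - 1 = m := rfl
  rw [h3, Nat.mul_comm] at h2
  omega

lemma sum_Tset {m : ℕ} {Y₂ : YoungDiagram} (h : Y₂.colLen 0 ≤ m) :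
    (Tset m Y₂).val.sum = Y₂.card + m * (m + 1) / 2 := by
  rw [Finset.sum_val, Tset, Finset.sum_image (fun a ha b hb hab => Tset_injOn m Y₂ ha hb hab)]
  simp only [id]
  rw [Finset.sum_add_distrib, staircase_sum, ← card_eq_sum_range h]

lemma Tset_inj {m : ℕ} {Y₂ Y₂' : YoungDiagram} (h : Y₂.colLen 0 ≤ m) (h' : Y₂'.colLen 0 ≤ m)
    (he : Tset m Y₂ = Tset m Y₂') : Y₂ = Y₂' := by
  have hc : (Tset m Y₂).card = m := card_Tset m Y₂
  have main : ∀ (Z : YoungDiagram), Z.colLen 0 ≤ m → Tset m Z = Tset m Y₂ →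
      (fun (j : Fin m) => Z.rowLen (m - 1 - (j : ℕ)) + ((j : ℕ) + 1)) =
        ⇑((Tset m Y₂).orderEmbOfFin hc) := by
    intro Z hZ hTZ
    apply Finset.orderEmbOfFin_unique hc
    · intro j
      rw [← hTZ, Tset, Finset.mem_image]
      refine ⟨m - 1 - (j : ℕ), Finset.mem_range.2 (by omega), ?_⟩
      have hj := j.2
      congr 1
      omega
    · intro j j' hjj'
      have hj' := j'.2
      have hlt : (j : ℕ) < (j' : ℕ) := hjj'
      have hanti := Z.rowLen_anti (m - 1 - (j' : ℕ)) (m - 1 - (j : ℕ)) (by omega)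
      simp only []
      omega
  have e1 := main Y₂ h rfl
  have e2 := main Y₂' h' he.symm
  have hfun := e1.trans e2.symm
  apply eq_of_rowLen_eq
  intro i
  rcases Nat.lt_or_ge i m with hi | hi
  · have hj : m - 1 - (m - 1 - i) = i := by omega
    have := congrFun hfun ⟨m - 1 - i, by omega⟩
    simp only [hj] at this
    omega
  · rw [rowLen_eq_zero_of_colLen_le h hi, rowLen_eq_zero_of_colLen_le h' hi]


lemma Tset_def (m : ℕ) (Y₂ : YoungDiagram) :
    Tset m Y₂ = Finset.image (fun k => Y₂.rowLen k + (m - k)) (Finset.range m) := rfl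


/-! ### marked sets from value sets -/

noncomputable def markT (Y : YoungDiagram) (T : Finset ℕ) : Finset (ℕ × ℕ) :=
  Y.removables.filter (fun c => c.2 + 1 ∈ T)

lemma markT_subset (Y : YoungDiagram) (T : Finset ℕ) : markT Y T ⊆ Y.removables :=
  Finset.filter_subset _ _

lemma image_markT {Y : YoungDiagram} {T : Finset ℕ} (h : T.val ≤ rm Y) :
    (markT Y T).image (fun c => c.2 + 1) = T := by
  ext v
  simp only [Finset.mem_image, markT, Finset.mem_filter]
  constructor
  · rintro ⟨c, ⟨_, hc⟩, rfl⟩; exact hc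
  · intro hv
    have hvrm : v ∈ rm Y := Multiset.mem_of_le h hv
    have hvpos : 0 < v := (mem_rm.1 hvrm).1
    obtain ⟨i, hi⟩ := exists_removable_of_mem_rm hvrm
    refine ⟨(i, v - 1), ⟨hi, ?_⟩, by omega⟩
    have : v - 1 + 1 = v := by omega
    simpa [this] using hv

lemma card_markT {Y : YoungDiagram} {T : Finset ℕ} (h : T.val ≤ rm Y) :
    (markT Y T).card = T.card := by
  have hinj : Set.InjOn (fun c => c.2 + 1) (markT Y T : Set (ℕ × ℕ)) := by
    intro c hc c' hc' hcc'
    simp only [Finset.coe_sort_coe, Finset.mem_coe] at hc hc'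
    exact removables_snd_injOn (markT_subset Y T hc) (markT_subset Y T hc')
      (by simpa using hcc')
  have hcard := Finset.card_image_of_injOn hinj
  rw [image_markT h] at hcard
  exact hcard.symm

lemma markT_image_eq {Y : YoungDiagram} {S : Finset (ℕ × ℕ)} (hS : S ⊆ Y.removables) :
    markT Y (S.image (fun c => c.2 + 1)) = S := by
  ext c
  simp only [markT, Finset.mem_filter, Finset.mem_image]
  constructor
  · rintro ⟨hc, c', hc', hcc'⟩
    have : c' = c := removables_snd_injOn (hS hc') hc (by omega)
    rwa [← this]
  · intro hc
    exact ⟨hS hc, c, hc, rfl⟩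

lemma image_val_le {Y : YoungDiagram} {S : Finset (ℕ × ℕ)} (hS : S ⊆ Y.removables) :
    (S.image (fun c => c.2 + 1)).val ≤ rm Y := by
  rw [Multiset.le_iff_count]
  intro a
  rcases Finset.decidableMem a (S.image (fun c => c.2 + 1)) with hmem | hmem
  · rw [Multiset.count_eq_zero_of_notMem hmem]; omega
  · have h1 : Multiset.count a (S.image (fun c => c.2 + 1)).val ≤ 1 :=
      Multiset.nodup_iff_count_le_one.1 (S.image (fun c => c.2 + 1)).nodup a
    have h2 : a ∈ rm Y := by
      obtain ⟨c, hc, rfl⟩ := Finset.mem_image.1 hmem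
      have hrem := mem_removables.1 (hS hc)
      exact mem_rm.2 ⟨by omega, c.1, hrem.1⟩
    have := Multiset.one_le_count_iff_mem.2 h2
    omega

/-! ### the big diagram -/

noncomputable def bigY (m : ℕ) (Y₁ Y₂ : YoungDiagram) : YoungDiagram :=
  ofM (rm Y₁ + (Tset m Y₂).val)

lemma rm_bigY (m : ℕ) (Y₁ Y₂ : YoungDiagram) :
    rm (bigY m Y₁ Y₂) = rm Y₁ + (Tset m Y₂).val := by
  apply rm_ofM
  intro x hx
  rcases Multiset.mem_add.1 hx with h | h
  · exact (mem_rm.1 h).1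
  · exact pos_of_mem_Tset h

lemma Tval_le_rm_bigY (m : ℕ) (Y₁ Y₂ : YoungDiagram) :
    (Tset m Y₂).val ≤ rm (bigY m Y₁ Y₂) := by
  rw [rm_bigY]; exact Multiset.le_add_left _ _

lemma card_bigY {m : ℕ} (Y₁ : YoungDiagram) {Y₂ : YoungDiagram} (h : Y₂.colLen 0 ≤ m) :
    (bigY m Y₁ Y₂).card = Y₁.card + Y₂.card + m * (m + 1) / 2 := by
  rw [card_eq_sum_rm, rm_bigY, Multiset.sum_add, sum_Tset h, ← card_eq_sum_rm, add_assoc]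

lemma colLen_bigY (m : ℕ) (Y₁ Y₂ : YoungDiagram) :
    (bigY m Y₁ Y₂).colLen 0 = Y₁.colLen 0 + m := by
  rw [← card_rm, rm_bigY, Multiset.card_add, card_rm]
  congr 1
  have : ((Tset m Y₂).val).card = (Tset m Y₂).card := rfl
  rw [this, card_Tset]

/-! ### sorted list lemmas and reconstruction of `Y₂` from `T` -/

lemma getD_add_le {l : List ℕ} (hl : l.Pairwise (· < ·)) (j d : ℕ) (h : j + d < l.length) :
    l.getD j 0 + d ≤ l.getD (j + d) 0 := by
  induction d with
  | zero => simp
  | succ d ih =>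
    have h1 : j + d < l.length := by omega
    have ih' := ih (by omega)
    have hstep : l.getD (j + d) 0 < l.getD (j + d + 1) 0 := by
      rw [List.getD_eq_getElem _ _ h1, List.getD_eq_getElem _ _ (by omega : j + d + 1 < l.length)]
      have := hl.rel_get_of_lt (a := ⟨j + d, h1⟩) (b := ⟨j + d + 1, by omega⟩)
        (by simp [Fin.lt_def])
      simpa [List.get_eq_getElem] using this
    rw [show j + (d + 1) = j + d + 1 from rfl]
    omega

lemma getD_ge {T : Finset ℕ} (hpos : ∀ x ∈ T, 0 < x) {j : ℕ}
    (hj : j < (T.sort (· ≤ ·)).length) : j + 1 ≤ (T.sort (· ≤ ·)).getD j 0 := by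
  have h0 : 0 < (T.sort (· ≤ ·)).getD 0 0 := by
    rw [List.getD_eq_getElem _ _ (by omega : 0 < (T.sort (· ≤ ·)).length)]
    apply hpos
    rw [← Finset.mem_sort (· ≤ ·)]
    exact List.getElem_mem _
  have h2 := getD_add_le ((Finset.sortedLT_sort T).pairwise) 0 j (by omega)
  rw [Nat.zero_add] at h2
  omega

noncomputable def wT (m : ℕ) (T : Finset ℕ) : List ℕ :=
  (List.range m).map (fun k => (T.sort (· ≤ ·)).getD (m - 1 - k) 0 - (m - k))

lemma wT_getD {m : ℕ} {T : Finset ℕ} {k : ℕ} (hk : k < m) :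
    (wT m T).getD k 0 = (T.sort (· ≤ ·)).getD (m - 1 - k) 0 - (m - k) := by
  rw [wT, List.getD_eq_getElem _ _ (by simpa using hk)]
  simp

lemma wT_length (m : ℕ) (T : Finset ℕ) : (wT m T).length = m := by simp [wT]

lemma wT_sorted {m : ℕ} {T : Finset ℕ} (hT : T.card = m) (hpos : ∀ x ∈ T, 0 < x) :
    (wT m T).SortedGE := by
  have hlen : (T.sort (· ≤ ·)).length = m := by rw [Finset.length_sort, hT]
  rw [List.sortedGE_iff_pairwise, List.pairwise_iff_getElem]
  intro i j hi hj hij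
  rw [wT_length] at hi hj
  have e1 : (wT m T)[i]'(by rw [wT_length]; omega) = (wT m T).getD i 0 :=
    (List.getD_eq_getElem _ _ (by rw [wT_length]; omega)).symm
  have e2 : (wT m T)[j]'(by rw [wT_length]; omega) = (wT m T).getD j 0 :=
    (List.getD_eq_getElem _ _ (by rw [wT_length]; omega)).symm
  rw [e1, e2, wT_getD hi, wT_getD hj]
  have hgrow := getD_add_le ((Finset.sortedLT_sort T).pairwise) (m - 1 - j) ((m - 1 - i) - (m - 1 - j))
    (by omega)
  have hidx : m - 1 - j + (m - 1 - i - (m - 1 - j)) = m - 1 - i := by omega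
  rw [hidx] at hgrow
  have hge := getD_ge hpos (show m - 1 - j < (T.sort (· ≤ ·)).length by omega)
  omega

lemma colLen_ofRowLens_le (w : List ℕ) (hw : List.SortedGE w) :
    (YoungDiagram.ofRowLens w hw).colLen 0 ≤ w.length := by
  by_contra hcon
  push_neg at hcon
  have := rowLen_pos_iff (Y := YoungDiagram.ofRowLens w hw) (i := w.length)
  rw [rowLen_ofRowLens', List.getD_eq_default _ _ (le_refl _)] at this
  omega

lemma Tset_Y₂ofT {m : ℕ} {T : Finset ℕ} (hT : T.card = m) (hpos : ∀ x ∈ T, 0 < x) :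
    Tset m (YoungDiagram.ofRowLens (wT m T) (wT_sorted hT hpos)) = T := by
  have hlen : (T.sort (· ≤ ·)).length = m := by rw [Finset.length_sort, hT]
  rw [Tset_def]
  ext v
  simp only [Finset.mem_image, Finset.mem_range]
  constructor
  · rintro ⟨k, hk, rfl⟩
    rw [rowLen_ofRowLens', wT_getD hk]
    have hge := getD_ge hpos (show m - 1 - k < (T.sort (· ≤ ·)).length by omega)
    have heq : (T.sort (· ≤ ·)).getD (m - 1 - k) 0 - (m - k) + (m - k) =
        (T.sort (· ≤ ·)).getD (m - 1 - k) 0 := by omega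
    rw [heq]
    rw [← Finset.mem_sort (· ≤ ·), List.getD_eq_getElem _ _ (by omega)]
    exact List.getElem_mem _
  · intro hv
    have : v ∈ T.sort (· ≤ ·) := (Finset.mem_sort (· ≤ ·)).2 hv
    obtain ⟨j, hj, hjv⟩ := List.getElem_of_mem this
    rw [hlen] at hj
    refine ⟨m - 1 - j, by omega, ?_⟩
    rw [rowLen_ofRowLens', wT_getD (by omega : m - 1 - j < m)]
    have hidx : m - 1 - (m - 1 - j) = j := by omega
    rw [hidx]
    have hge := getD_ge hpos (show j < (T.sort (· ≤ ·)).length by omega)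
    have hgetD : (T.sort (· ≤ ·)).getD j 0 = v := by
      rw [List.getD_eq_getElem _ _ (by omega)]; exact hjv
    omega


lemma bigY_def (m : ℕ) (Y₁ Y₂ : YoungDiagram) : bigY m Y₁ Y₂ = ofM (rm Y₁ + (Tset m Y₂).val) := rfl


/-! ### the bijection -/

noncomputable def eMap (m N : ℕ)
    (b : {p : YoungDiagram × YoungDiagram // p.2.colLen 0 ≤ m ∧ p.1.card + p.2.card = N}) :
    {p : YoungDiagram × Finset (ℕ × ℕ) //
      p.2 ⊆ p.1.removables ∧ p.2.card = m ∧ p.1.card = N + m * (m + 1) / 2} :=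
  ⟨(bigY m b.val.1 b.val.2, markT (bigY m b.val.1 b.val.2) (Tset m b.val.2)),
   markT_subset _ _,
   by rw [card_markT (Tval_le_rm_bigY m _ _), card_Tset],
   by rw [card_bigY _ b.2.1, b.2.2]⟩

lemma eMap_inj (m N : ℕ) : Function.Injective (eMap m N) := by
  rintro ⟨⟨Y₁, Y₂⟩, h₂, hN⟩ ⟨⟨Y₁', Y₂'⟩, h₂', hN'⟩ heq
  simp only [eMap, Subtype.mk.injEq, Prod.mk.injEq] at heq
  obtain ⟨hY, hS⟩ := heq
  have hT : Tset m Y₂ = Tset m Y₂' := by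
    have h1 := image_markT (Tval_le_rm_bigY m Y₁ Y₂)
    have h2 := image_markT (Tval_le_rm_bigY m Y₁' Y₂')
    rw [← h1, ← h2, hS]
  have hY₂ : Y₂ = Y₂' := Tset_inj h₂ h₂' hT
  have hY₁ : Y₁ = Y₁' := by
    have h3 := congrArg rm hY
    rw [rm_bigY, rm_bigY, hT] at h3
    have h4 : rm Y₁ = rm Y₁' := add_right_cancel h3
    rw [← ofM_rm Y₁, ← ofM_rm Y₁', h4]
  subst hY₂; subst hY₁
  rfl

lemma eMap_surj (m N : ℕ) : Function.Surjective (eMap m N) := by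
  rintro ⟨⟨Y, S⟩, hS, hScard, hYcard⟩
  set T := S.image (fun c => c.2 + 1) with hT
  have hTle : T.val ≤ rm Y := image_val_le hS
  have hTcard : T.card = m := by
    rw [hT, Finset.card_image_of_injOn, hScard]
    intro c hc c' hc' hcc'
    simp only [Finset.coe_sort_coe, Finset.mem_coe] at hc hc'
    exact removables_snd_injOn (hS hc) (hS hc') (by simpa using hcc')
  have hTpos : ∀ x ∈ T, 0 < x := by
    intro x hx
    rw [hT, Finset.mem_image] at hx
    obtain ⟨c, _, rfl⟩ := hx
    omega
  set Y₂ := YoungDiagram.ofRowLens (wT m T) (wT_sorted hTcard hTpos) with hY₂def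
  have hTY₂ : Tset m Y₂ = T := Tset_Y₂ofT hTcard hTpos
  have hY₂col : Y₂.colLen 0 ≤ m := by
    rw [hY₂def]
    have := colLen_ofRowLens_le (wT m T) (wT_sorted hTcard hTpos)
    rwa [wT_length] at this
  set Y₁ := ofM (rm Y - T.val) with hY₁def
  have hY₁pos : ∀ x ∈ rm Y - T.val, 0 < x := fun x hx =>
    (mem_rm.1 (Multiset.mem_of_le tsub_le_self hx)).1
  have hrmY₁ : rm Y₁ = rm Y - T.val := rm_ofM hY₁pos
  have hbig : bigY m Y₁ Y₂ = Y := by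
    rw [bigY_def, hTY₂, hrmY₁, tsub_add_cancel_of_le hTle, ofM_rm]
  have hTsum : T.val.sum = Y₂.card + m * (m + 1) / 2 := by
    rw [← hTY₂]; exact sum_Tset hY₂col
  have hsum_le : T.val.sum ≤ (rm Y).sum := sum_le_sum_of_le hTle
  have hcards : Y₁.card + Y₂.card = N := by
    have h1 : Y₁.card = (rm Y - T.val).sum := by rw [card_eq_sum_rm, hrmY₁]
    have hsub : (rm Y - T.val).sum + T.val.sum = (rm Y).sum := by
      rw [← Multiset.sum_add, tsub_add_cancel_of_le hTle]
    have hYsum : (rm Y).sum = N + m * (m + 1) / 2 := by rw [← card_eq_sum_rm, hYcard]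
    omega
  refine ⟨⟨(Y₁, Y₂), hY₂col, hcards⟩, ?_⟩
  apply Subtype.ext
  show (bigY m Y₁ Y₂, markT (bigY m Y₁ Y₂) (Tset m Y₂)) = (Y, S)
  rw [hTY₂, hbig, hT, markT_image_eq hS]


end YDAux

open YDAux in
set_option maxHeartbeats 1000000 in
/-- For every `m, N ≥ 0`, the sum of `t^{2(|Y| + m − m(m+1)/2 − l(Y))}` over all pairs
`(Y,S)` with `S` a set of `m` removable boxes of `Y` and `|Y| = N + m(m+1)/2` equals
the sum of `t^{2(|Y¹| + |Y²| − l(Y¹))}` over all pairs of Young diagrams `(Y¹,Y²)`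
with `|Y¹| + |Y²| = N` and `Y²` having at most `m` columns.  Here `l(·)` is the number
of columns. -/
theorem sum_marked_eq_sum_pairs (m N : ℕ) :
    (∑ᶠ a : {p : YoungDiagram × Finset (ℕ × ℕ) //
          p.2 ⊆ p.1.removables ∧ p.2.card = m ∧ p.1.card = N + m * (m + 1) / 2},
        (Polynomial.X : Polynomial ℤ) ^
          (2 * (a.val.1.card + m - m * (m + 1) / 2 - a.val.1.colLen 0))) =
      ∑ᶠ b : {p : YoungDiagram × YoungDiagram //
          p.2.colLen 0 ≤ m ∧ p.1.card + p.2.card = N},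
        (Polynomial.X : Polynomial ℤ) ^
          (2 * (b.val.1.card + b.val.2.card - b.val.1.colLen 0)) := by
  refine (finsum_eq_of_bijective (eMap m N) ⟨eMap_inj m N, eMap_surj m N⟩ ?_).symm
  rintro ⟨⟨Y₁, Y₂⟩, h₂, hN⟩
  have hstep : eMap m N ⟨(Y₁, Y₂), ⟨h₂, hN⟩⟩ =
      ⟨(bigY m Y₁ Y₂, markT (bigY m Y₁ Y₂) (Tset m Y₂)),
        (eMap m N ⟨(Y₁, Y₂), ⟨h₂, hN⟩⟩).2⟩ := rfl
  rw [hstep]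
  dsimp only
  have h1 : (bigY m Y₁ Y₂).card = Y₁.card + Y₂.card + m * (m + 1) / 2 := card_bigY Y₁ h₂
  have h2 := colLen_bigY m Y₁ Y₂
  have h3 := colLen_le_card Y₁
  have hexp : 2 * (Y₁.card + Y₂.card - Y₁.colLen 0) =
      2 * ((bigY m Y₁ Y₂).card + m - m * (m + 1) / 2 - (bigY m Y₁ Y₂).colLen 0) := by
    omega
  rw [hexp]
end

section
/- As an identity of formal power series in q over the ring ℤ[t], for every m ≥ 0: the sum over all pairs of partitions (Y¹, Y²) such that Y² has at most m columns, of t^{2(|Y¹|+|Y²|−l(Y¹))} q^{|Y¹|+|Y²|}, equals the product (∏_{d=1}^{∞} 1/(1 − t^{2d−2} q^{d})) · (∏_{d=1}^{m} 1/(1 − t^{2d} q^{d})). -/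
set_option maxHeartbeats 1000000

open scoped Classical

/-- The inverse power series `1/(1 - t^a q^d)` in `ℤ[t][[q]]`, where `t` is the
polynomial variable and `q` the power series variable. -/
noncomputable def invFac (a d : ℕ) : PowerSeries (Polynomial ℤ) :=
  PowerSeries.invOfUnit
    (1 - PowerSeries.C (R := Polynomial ℤ) (Polynomial.X ^ a) * PowerSeries.X ^ d) 1

open Finset PowerSeries Multiset

lemma invFac_eq (a d : ℕ) (hd : 0 < d) :
    invFac a d = PowerSeries.mk
      (fun n => if d ∣ n then (Polynomial.X : Polynomial ℤ) ^ (a * (n / d)) else 0) := by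
  set u : PowerSeries (Polynomial ℤ) :=
    1 - PowerSeries.C (R := Polynomial ℤ) (Polynomial.X ^ a) * PowerSeries.X ^ d with hu
  set G : PowerSeries (Polynomial ℤ) := PowerSeries.mk
      (fun n => if d ∣ n then (Polynomial.X : Polynomial ℤ) ^ (a * (n / d)) else 0) with hG
  have hcu : PowerSeries.constantCoeff (R := Polynomial ℤ) u = ((1 : (Polynomial ℤ)ˣ) : Polynomial ℤ) := by
    simp [hu, hd.ne']
  have key : u * G = 1 := by
    apply PowerSeries.ext; intro n
    rw [hu, sub_mul, one_mul, mul_assoc]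
    simp only [map_sub, PowerSeries.coeff_C_mul, PowerSeries.coeff_X_pow_mul']
    rcases Nat.eq_zero_or_pos n with rfl | hn
    · have : ¬ d ≤ 0 := by omega
      simp [hG, this]
    · rw [PowerSeries.coeff_one, if_neg hn.ne']
      rcases le_or_gt d n with hdn | hdn
      · rw [if_pos hdn]
        simp only [hG, PowerSeries.coeff_mk]
        have hdvd : d ∣ n ↔ d ∣ n - d := by
          constructor
          · intro h; exact (Nat.dvd_sub h dvd_rfl)
          · intro h; have := Nat.dvd_add h (dvd_refl d); rwa [Nat.sub_add_cancel hdn] at this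
        by_cases h : d ∣ n
        · rw [if_pos h, if_pos (hdvd.mp h)]
          obtain ⟨k, rfl⟩ := h
          rcases k with _ | k
          · omega
          · have h1 : d * (k + 1) - d = d * k := by rw [Nat.mul_succ]; omega
            rw [h1, Nat.mul_div_cancel_left _ hd, Nat.mul_div_cancel_left _ hd,
              mul_add, mul_one, pow_add, mul_comm ((Polynomial.X : Polynomial ℤ) ^ (a * k)), sub_self]
        · rw [if_neg h, if_neg (fun hc => h (hdvd.mpr hc)), mul_zero, sub_zero]
      · rw [if_neg (by omega)]
        have : ¬ d ∣ n := fun h => absurd (Nat.le_of_dvd hn h) (by omega)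
        simp [hG, this]
  symm
  calc G = G * (u * PowerSeries.invOfUnit u 1) := by
            rw [PowerSeries.mul_invOfUnit u 1 hcu, mul_one]
    _ = (u * G) * PowerSeries.invOfUnit u 1 := by ring
    _ = invFac a d := by rw [key, one_mul]; rfl

lemma msum_count (t : Multiset ℕ) (S : Finset ℕ) (h : ∀ x ∈ t, x ∈ S) :
    ∑ d ∈ S, t.count d * d = t.sum := by
  have h1 : t.sum = (t.map id).sum := by simp
  rw [h1, Finset.sum_multiset_map_count t id]
  rw [Finset.sum_subset (fun x hx => h x (Multiset.mem_toFinset.mp hx))]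
  · simp [mul_comm]
  · intro x _ hx
    simp [Multiset.count_eq_zero_of_notMem (fun hc => hx (Multiset.mem_toFinset.mpr hc))]

lemma mcard_count (t : Multiset ℕ) (S : Finset ℕ) (h : ∀ x ∈ t, x ∈ S) :
    ∑ d ∈ S, t.count d = Multiset.card t := by
  rw [← Multiset.toFinset_sum_count_eq t]
  rw [Finset.sum_subset (fun x hx => h x (Multiset.mem_toFinset.mp hx))]
  intro x _ hx
  simp [Multiset.count_eq_zero_of_notMem (fun hc => hx (Multiset.mem_toFinset.mpr hc))]

noncomputable def divFinsupp (l : ℕ →₀ ℕ) : ℕ →₀ ℕ :=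
  Finsupp.onFinset l.support (fun d => l d / d)
    (fun d h => by
      rw [Finsupp.mem_support_iff]
      intro hc
      simp [hc] at h)

noncomputable def mulFinsupp {j : ℕ} (Y : Nat.Partition j) : ℕ →₀ ℕ :=
  Finsupp.onFinset Y.parts.toFinset (fun d => Y.parts.count d * d)
    (fun d h => by
      rw [Multiset.mem_toFinset, ← Multiset.count_ne_zero]
      intro hc
      simp [hc] at h)

lemma hdivapp (l : ℕ →₀ ℕ) (d : ℕ) : divFinsupp l d = l d / d := by simp [divFinsupp]

lemma hmulapp {j : ℕ} (Y : Nat.Partition j) (d : ℕ) :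
    mulFinsupp Y d = Y.parts.count d * d := by simp [mulFinsupp]

section helpers
variable (M j : ℕ)

lemma hsuppQ (l : ℕ →₀ ℕ) (h : l.support ⊆ Finset.Icc 1 M) :
    ∀ x ∈ (divFinsupp l).toMultiset, x ∈ Finset.Icc 1 M := by
  intro x hx
  rw [Finsupp.mem_toMultiset] at hx
  exact h (Finsupp.support_onFinset_subset hx)

lemma hposQ (l : ℕ →₀ ℕ) (h : l.support ⊆ Finset.Icc 1 M) :
    ∀ x ∈ (divFinsupp l).toMultiset, 0 < x := by
  intro x hx
  have := Finset.mem_Icc.mp (hsuppQ M l h x hx)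
  omega

lemma hsumQ (l : ℕ →₀ ℕ) (hdvd : ∀ d ∈ Finset.Icc 1 M, d ∣ l d)
    (h : (Finset.Icc 1 M).sum l = j ∧ l.support ⊆ Finset.Icc 1 M) :
    ((divFinsupp l).toMultiset).sum = j := by
  rw [← msum_count _ _ (hsuppQ M l h.2)]
  have heq : ∀ d ∈ Finset.Icc 1 M, ((divFinsupp l).toMultiset).count d * d = l d := by
    intro d hd
    rw [Finsupp.count_toMultiset, hdivapp]
    exact Nat.div_mul_cancel (hdvd d hd)
  rw [Finset.sum_congr rfl heq]
  exact h.1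

end helpers

lemma coeff_prod_invFac (a : ℕ → ℕ) (M j : ℕ) :
    PowerSeries.coeff (R := Polynomial ℤ) j (∏ d ∈ Finset.Icc 1 M, invFac (a d) d) =
      ∑ Y : Nat.Partition j, if Y.parts.sup ≤ M then
        (Polynomial.X : Polynomial ℤ) ^ (∑ d ∈ Finset.Icc 1 M, a d * Y.parts.count d) else 0 := by
  have hprod : (∏ d ∈ Finset.Icc 1 M, invFac (a d) d) =
      ∏ d ∈ Finset.Icc 1 M, PowerSeries.mk
        (fun n => if d ∣ n then (Polynomial.X : Polynomial ℤ) ^ (a d * (n / d)) else 0) := by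
    refine Finset.prod_congr rfl (fun d hd => invFac_eq _ _ ?_)
    exact (Finset.mem_Icc.mp hd).1
  rw [hprod, PowerSeries.coeff_prod]
  have step1 : ∀ l ∈ finsuppAntidiag (Finset.Icc 1 M) j,
      (∏ d ∈ Finset.Icc 1 M, (PowerSeries.coeff (R := Polynomial ℤ) (l d))
        (PowerSeries.mk fun n => if d ∣ n then (Polynomial.X : Polynomial ℤ) ^ (a d * (n / d)) else 0)) =
      if (∀ d ∈ Finset.Icc 1 M, d ∣ l d) then
        (Polynomial.X : Polynomial ℤ) ^ (∑ d ∈ Finset.Icc 1 M, a d * (l d / d)) else 0 := by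
    intro l _
    simp only [PowerSeries.coeff_mk]
    by_cases hl : ∀ d ∈ Finset.Icc 1 M, d ∣ l d
    · rw [if_pos hl, ← Finset.prod_pow_eq_pow_sum]
      exact Finset.prod_congr rfl (fun d hd => if_pos (hl d hd))
    · rw [if_neg hl]
      push_neg at hl
      obtain ⟨d, hd, hnd⟩ := hl
      exact Finset.prod_eq_zero hd (if_neg hnd)
  rw [Finset.sum_congr rfl step1, ← Finset.sum_filter, ← Finset.sum_filter]
  refine Finset.sum_bij'
    (fun l hl => ⟨(divFinsupp l).toMultiset,
        fun {x} hx => hposQ M l ((mem_finsuppAntidiag.mp (Finset.mem_filter.mp hl).1).2) x hx,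
        hsumQ M j l (Finset.mem_filter.mp hl).2 (mem_finsuppAntidiag.mp (Finset.mem_filter.mp hl).1)⟩)
    (fun Y _ => mulFinsupp Y) ?_ ?_ ?_ ?_ ?_
  · -- hi
    intro l hl
    refine Finset.mem_filter.mpr ⟨Finset.mem_univ _, ?_⟩
    have hs := (mem_finsuppAntidiag.mp (Finset.mem_filter.mp hl).1).2
    exact Multiset.sup_le.mpr (fun x hx => (Finset.mem_Icc.mp (hsuppQ M l hs x hx)).2)
  · -- hj
    intro Y hY
    have hsup := (Finset.mem_filter.mp hY).2
    have hYmem : ∀ d ∈ Y.parts, d ∈ Finset.Icc 1 M := by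
      intro d hd
      exact Finset.mem_Icc.mpr ⟨Y.parts_pos hd, le_trans (Multiset.le_sup hd) hsup⟩
    refine Finset.mem_filter.mpr ⟨mem_finsuppAntidiag.mpr ⟨?_, ?_⟩, ?_⟩
    · rw [Finset.sum_congr rfl (fun d _ => hmulapp Y d), msum_count _ _ hYmem, Y.parts_sum]
    · intro d hd
      have := Finsupp.support_onFinset_subset hd
      rw [Multiset.mem_toFinset] at this
      exact hYmem d this
    · intro d _
      rw [hmulapp]
      exact dvd_mul_left d _
  · -- left_inv
    intro l hl
    have hmem := mem_finsuppAntidiag.mp (Finset.mem_filter.mp hl).1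
    have hdvd := (Finset.mem_filter.mp hl).2
    ext d
    rw [hmulapp]
    show Multiset.count d (Finsupp.toMultiset (divFinsupp l)) * d = l d
    rw [Finsupp.count_toMultiset, hdivapp]
    by_cases hd : d ∈ l.support
    · exact Nat.div_mul_cancel (hdvd d (hmem.2 hd))
    · rw [Finsupp.notMem_support_iff] at hd
      simp [hd]
  · -- right_inv
    intro Y hY
    apply Nat.Partition.ext
    show Finsupp.toMultiset (divFinsupp (mulFinsupp Y)) = Y.parts
    ext d
    rw [Finsupp.count_toMultiset, hdivapp, hmulapp]
    rcases Nat.eq_zero_or_pos d with rfl | hd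
    · rw [Multiset.count_eq_zero_of_notMem (fun hc => absurd (Y.parts_pos hc) (lt_irrefl 0))]
    · exact Nat.mul_div_cancel _ hd
  · -- values
    intro l hl
    congr 1
    refine Finset.sum_congr rfl (fun d _ => ?_)
    show a d * (l d / d) = a d * Multiset.count d (Finsupp.toMultiset (divFinsupp l))
    rw [Finsupp.count_toMultiset, hdivapp]

lemma sum_map_pred (t : Multiset ℕ) (h : ∀ a ∈ t, 1 ≤ a) :
    (t.map (· - 1)).sum + Multiset.card t = t.sum := by
  induction t using Multiset.induction with
  | empty => simp
  | cons a s ih =>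
    simp only [Multiset.map_cons, Multiset.sum_cons, Multiset.card_cons]
    have ha := h a (Multiset.mem_cons_self a s)
    have := ih (fun b hb => h b (Multiset.mem_cons_of_mem hb))
    omega

lemma sum_map_succ (t : Multiset ℕ) :
    (t.map (· + 1)).sum = t.sum + Multiset.card t := by
  induction t using Multiset.induction with
  | empty => simp
  | cons a s ih =>
    simp only [Multiset.map_cons, Multiset.sum_cons, Multiset.card_cons, ih]
    omega

lemma pcard_le_sum (t : Multiset ℕ) (h : ∀ a ∈ t, 1 ≤ a) : Multiset.card t ≤ t.sum := by
  have := sum_map_pred t h; omega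

-- shrink and grow
noncomputable def shrink (t : Multiset ℕ) : Multiset ℕ := (t.filter (fun a => 1 < a)).map (· - 1)
noncomputable def grow (k : ℕ) (t : Multiset ℕ) : Multiset ℕ :=
  t.map (· + 1) + Multiset.replicate k 1

lemma shrink_pos (t : Multiset ℕ) : ∀ b ∈ shrink t, 0 < b := by
  intro b hb
  rw [shrink, Multiset.mem_map] at hb
  obtain ⟨a, ha, rfl⟩ := hb
  have := (Multiset.mem_filter.mp ha).2
  omega

lemma shrink_card_le (t : Multiset ℕ) : Multiset.card (shrink t) ≤ Multiset.card t := by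
  rw [shrink, Multiset.card_map]
  exact Multiset.card_le_card (Multiset.filter_le _ t)

lemma eq_one_filter (t : Multiset ℕ) (h : ∀ a ∈ t, 1 ≤ a) :
    t.filter (fun a => ¬ 1 < a) = Multiset.replicate (Multiset.card (t.filter (fun a => ¬ 1 < a))) 1 := by
  apply Multiset.eq_replicate_of_mem
  intro b hb
  have h1 := Multiset.mem_filter.mp hb
  have := h b h1.1
  omega

lemma shrink_sum (t : Multiset ℕ) (h : ∀ a ∈ t, 1 ≤ a) :
    (shrink t).sum + Multiset.card t = t.sum := by
  have hsplit := Multiset.filter_add_not (fun a => 1 < a) t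
  have h1 : ((t.filter (fun a => 1 < a)).map (· - 1)).sum + Multiset.card (t.filter (fun a => 1 < a))
      = (t.filter (fun a => 1 < a)).sum :=
    sum_map_pred _ (fun a ha => by have := (Multiset.mem_filter.mp ha).2; omega)
  have h2 : (t.filter (fun a => ¬ 1 < a)).sum = Multiset.card (t.filter (fun a => ¬ 1 < a)) := by
    rw [eq_one_filter t h]
    simp [Multiset.sum_replicate]
  have hc : Multiset.card (t.filter (fun a => 1 < a)) + Multiset.card (t.filter (fun a => ¬ 1 < a))
      = Multiset.card t := by
    rw [← Multiset.card_add, hsplit]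
  have hs : (t.filter (fun a => 1 < a)).sum + (t.filter (fun a => ¬ 1 < a)).sum = t.sum := by
    rw [← Multiset.sum_add, hsplit]
  rw [shrink]
  omega

lemma grow_shrink (t : Multiset ℕ) (h : ∀ a ∈ t, 1 ≤ a) :
    grow (Multiset.card t - Multiset.card (shrink t)) (shrink t) = t := by
  rw [grow, shrink, Multiset.map_map]
  have hmap : ((t.filter (fun a => 1 < a)).map ((· + 1) ∘ (· - 1))) = t.filter (fun a => 1 < a) := by
    rw [show ((· + 1) ∘ (· - 1) : ℕ → ℕ) = fun a => a - 1 + 1 from rfl]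
    rw [Multiset.map_congr rfl (fun a ha => by
      have := (Multiset.mem_filter.mp ha).2
      show a - 1 + 1 = id a
      simp only [id]
      omega : ∀ a ∈ t.filter (fun a => 1 < a), a - 1 + 1 = id a)]
    simp
  rw [hmap]
  have hcard : Multiset.card t - Multiset.card ((t.filter (fun a => 1 < a)).map (· - 1))
      = Multiset.card (t.filter (fun a => ¬ 1 < a)) := by
    rw [Multiset.card_map]
    have : Multiset.card (t.filter (fun a => 1 < a)) + Multiset.card (t.filter (fun a => ¬ 1 < a))
        = Multiset.card t := by rw [← Multiset.card_add, Multiset.filter_add_not]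
    omega
  rw [hcard, ← eq_one_filter t h, Multiset.filter_add_not]

lemma shrink_grow (k : ℕ) (t : Multiset ℕ) (h : ∀ a ∈ t, 1 ≤ a) :
    shrink (grow k t) = t := by
  rw [grow, shrink, Multiset.filter_add, Multiset.filter_map]
  have h1 : Multiset.filter ((fun a => 1 < a) ∘ (· + 1)) t = t :=
    Multiset.filter_eq_self.mpr (fun a ha => by have := h a ha; simp; omega)
  have h2 : Multiset.filter (fun a => 1 < a) (Multiset.replicate k 1) = 0 :=
    Multiset.filter_eq_nil.mpr (fun a ha => by rw [Multiset.eq_of_mem_replicate ha]; omega)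
  rw [h1, h2, add_zero, Multiset.map_map]
  rw [Multiset.map_congr rfl (fun a ha => by
    show a + 1 - 1 = id a
    simp only [id]
    omega : ∀ a ∈ t, ((· - 1) ∘ (· + 1)) a = id a)]
  simp

lemma grow_sum (k : ℕ) (t : Multiset ℕ) :
    (grow k t).sum = t.sum + Multiset.card t + k := by
  rw [grow, Multiset.sum_add, sum_map_succ, Multiset.sum_replicate, smul_eq_mul, mul_one]

lemma grow_card (k : ℕ) (t : Multiset ℕ) :
    Multiset.card (grow k t) = Multiset.card t + k := by
  rw [grow, Multiset.card_add, Multiset.card_map, Multiset.card_replicate]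

lemma grow_pos (k : ℕ) (t : Multiset ℕ) : ∀ b ∈ grow k t, 0 < b := by
  intro b hb
  rw [grow, Multiset.mem_add] at hb
  rcases hb with hb | hb
  · obtain ⟨a, _, rfl⟩ := Multiset.mem_map.mp hb; omega
  · rw [Multiset.eq_of_mem_replicate hb]; omega

lemma partition_sup_le (i : ℕ) (Y : Nat.Partition i) : Y.parts.sup ≤ i :=
  Multiset.sup_le.mpr fun a ha => by
    have h := Multiset.single_le_sum (fun x _ => Nat.zero_le x) a ha
    rwa [Y.parts_sum] at h

lemma partition_card_le (i : ℕ) (Y : Nat.Partition i) : Multiset.card Y.parts ≤ i := by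
  have h := pcard_le_sum Y.parts (fun a ha => Y.parts_pos ha)
  rwa [Y.parts_sum] at h

lemma card_filter_split {α : Type*} [Fintype α] (p q : α → Prop) [DecidablePred p] [DecidablePred q] :
    (Finset.univ.filter p).card = (Finset.univ.filter (fun x => p x ∧ q x)).card
      + (Finset.univ.filter (fun x => p x ∧ ¬ q x)).card := by
  rw [← Finset.card_filter_add_card_filter_not (p := q) (s := Finset.univ.filter p)]
  congr 1 <;> rw [Finset.filter_filter]

lemma erase_sum {i s : ℕ} (Y : Nat.Partition i) (hmem : (s+1) ∈ Y.parts) :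
    (Y.parts.erase (s+1)).sum = i - (s+1) := by
  have h := congrArg Multiset.sum (Multiset.cons_erase hmem)
  rw [Multiset.sum_cons, Y.parts_sum] at h
  omega

lemma cardA_step (i s : ℕ) (h : s + 1 ≤ i) :
    (Finset.univ.filter (fun Y : Nat.Partition i => Y.parts.sup ≤ s+1 ∧ (s+1) ∈ Y.parts)).card
    = (Finset.univ.filter (fun Y : Nat.Partition (i-(s+1)) => Y.parts.sup ≤ s+1)).card := by
  refine Finset.card_bij'
    (fun Y hY => ⟨Y.parts.erase (s+1),
      fun {a} ha => Y.parts_pos (Multiset.mem_of_mem_erase ha),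
      erase_sum Y (Finset.mem_filter.mp hY).2.2⟩)
    (fun Y' hY' => ⟨(s+1) ::ₘ Y'.parts,
      fun {a} ha => by
        rcases Multiset.mem_cons.mp ha with rfl | ha'
        · omega
        · exact Y'.parts_pos ha',
      by rw [Multiset.sum_cons, Y'.parts_sum]; omega⟩) ?_ ?_ ?_ ?_
  · intro Y hY
    refine Finset.mem_filter.mpr ⟨Finset.mem_univ _, ?_⟩
    exact Multiset.sup_le.mpr (fun a ha =>
      le_trans (Multiset.le_sup (Multiset.mem_of_mem_erase ha))
        (Multiset.sup_le.mpr (fun b hb => le_trans (Multiset.le_sup hb) ((Finset.mem_filter.mp hY).2.1))))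
  · intro Y' hY'
    refine Finset.mem_filter.mpr ⟨Finset.mem_univ _, ?_, Multiset.mem_cons_self _ _⟩
    show ((s+1) ::ₘ Y'.parts).sup ≤ s + 1
    rw [Multiset.sup_cons]
    exact sup_le le_rfl (Finset.mem_filter.mp hY').2
  · intro Y hY
    apply Nat.Partition.ext
    show (s+1) ::ₘ (Y.parts.erase (s+1)) = Y.parts
    exact Multiset.cons_erase (Finset.mem_filter.mp hY).2.2
  · intro Y' hY'
    apply Nat.Partition.ext
    show ((s+1) ::ₘ Y'.parts).erase (s+1) = Y'.parts
    exact Multiset.erase_cons_head _ _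

lemma cardB_step (i s : ℕ) (h : s + 1 ≤ i) :
    (Finset.univ.filter (fun Y : Nat.Partition i => Multiset.card Y.parts = s+1)).card
    = (Finset.univ.filter (fun Y : Nat.Partition (i-(s+1)) => Multiset.card Y.parts ≤ s+1)).card := by
  refine Finset.card_bij'
    (fun Y hY => ⟨shrink Y.parts,
      fun {a} ha => shrink_pos _ a ha,
      by
        have h1 := shrink_sum Y.parts (fun a ha => Y.parts_pos ha)
        rw [Y.parts_sum, (Finset.mem_filter.mp hY).2] at h1
        omega⟩)
    (fun Y' hY' => ⟨grow (s + 1 - Multiset.card Y'.parts) Y'.parts,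
      fun {a} ha => grow_pos _ _ a ha,
      by
        have hc := (Finset.mem_filter.mp hY').2
        rw [grow_sum, Y'.parts_sum]
        omega⟩) ?_ ?_ ?_ ?_
  · intro Y hY
    refine Finset.mem_filter.mpr ⟨Finset.mem_univ _, ?_⟩
    show Multiset.card (shrink Y.parts) ≤ s + 1
    exact le_trans (shrink_card_le _) (le_of_eq (Finset.mem_filter.mp hY).2)
  · intro Y' hY'
    refine Finset.mem_filter.mpr ⟨Finset.mem_univ _, ?_⟩
    show Multiset.card (grow (s + 1 - Multiset.card Y'.parts) Y'.parts) = s + 1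
    rw [grow_card]
    have := (Finset.mem_filter.mp hY').2
    omega
  · intro Y hY
    apply Nat.Partition.ext
    show grow (s + 1 - Multiset.card (shrink Y.parts)) (shrink Y.parts) = Y.parts
    have hc : s + 1 = Multiset.card Y.parts := ((Finset.mem_filter.mp hY).2).symm
    rw [hc]
    exact grow_shrink Y.parts (fun a ha => Y.parts_pos ha)
  · intro Y' hY'
    apply Nat.Partition.ext
    show shrink (grow (s + 1 - Multiset.card Y'.parts) Y'.parts) = Y'.parts
    exact shrink_grow _ Y'.parts (fun a ha => Y'.parts_pos ha)

lemma parts_eq_zero_of_zero {Y : Nat.Partition 0} : Y.parts = 0 := by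
  apply Multiset.eq_zero_of_forall_notMem
  intro a ha
  have h1 := Y.parts_pos ha
  have h2 := Multiset.single_le_sum (fun x _ => Nat.zero_le x) a ha
  rw [Y.parts_sum] at h2
  omega

lemma cA_eq_cB : ∀ i s : ℕ,
    (Finset.univ.filter (fun Y : Nat.Partition i => Y.parts.sup ≤ s)).card
      = (Finset.univ.filter (fun Y : Nat.Partition i => Multiset.card Y.parts ≤ s)).card := by
  intro i
  induction i using Nat.strong_induction_on with
  | _ i IH =>
  intro s
  induction s with
  | zero =>
    rcases Nat.eq_zero_or_pos i with rfl | hi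
    · rw [Finset.filter_true_of_mem (fun Y _ => by rw [parts_eq_zero_of_zero (Y := Y)]; simp),
        Finset.filter_true_of_mem (fun Y _ => by rw [parts_eq_zero_of_zero (Y := Y)]; simp)]
    · rw [Finset.filter_false_of_mem, Finset.filter_false_of_mem]
      · intro Y _ hc
        have : Y.parts = 0 := Multiset.card_eq_zero.mp (Nat.le_zero.mp hc)
        have h2 := Y.parts_sum
        rw [this] at h2
        simp at h2
        omega
      · intro Y _ hc
        have hz : Y.parts = 0 := by
          apply Multiset.eq_zero_of_forall_notMem
          intro a ha
          have := Y.parts_pos ha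
          have := le_trans (Multiset.le_sup ha) hc
          omega
        have h2 := Y.parts_sum
        rw [hz] at h2
        simp at h2
        omega
  | succ s IHs =>
    have splitA : (Finset.univ.filter (fun Y : Nat.Partition i => Y.parts.sup ≤ s + 1)).card
        = (Finset.univ.filter (fun Y : Nat.Partition i =>
            Y.parts.sup ≤ s + 1 ∧ (s+1) ∈ Y.parts)).card
          + (Finset.univ.filter (fun Y : Nat.Partition i =>
            Y.parts.sup ≤ s + 1 ∧ ¬ (s+1) ∈ Y.parts)).card :=
      card_filter_split _ _
    have splitB : (Finset.univ.filter (fun Y : Nat.Partition i => Multiset.card Y.parts ≤ s + 1)).card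
        = (Finset.univ.filter (fun Y : Nat.Partition i =>
            Multiset.card Y.parts ≤ s + 1 ∧ Multiset.card Y.parts = s + 1)).card
          + (Finset.univ.filter (fun Y : Nat.Partition i =>
            Multiset.card Y.parts ≤ s + 1 ∧ ¬ Multiset.card Y.parts = s + 1)).card :=
      card_filter_split _ _
    have hAeq : (Finset.univ.filter (fun Y : Nat.Partition i =>
        Y.parts.sup ≤ s + 1 ∧ ¬ (s+1) ∈ Y.parts)).card
        = (Finset.univ.filter (fun Y : Nat.Partition i => Y.parts.sup ≤ s)).card := by
      congr 1
      apply Finset.filter_congr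
      intro Y _
      constructor
      · rintro ⟨h1, h2⟩
        apply Multiset.sup_le.mpr
        intro a ha
        have := le_trans (Multiset.le_sup ha) h1
        have : a ≠ s + 1 := fun hc => h2 (hc ▸ ha)
        omega
      · intro h1
        refine ⟨le_trans h1 (by omega), fun hc => ?_⟩
        have := le_trans (Multiset.le_sup hc) h1
        omega
    have hBeq : (Finset.univ.filter (fun Y : Nat.Partition i =>
        Multiset.card Y.parts ≤ s + 1 ∧ ¬ Multiset.card Y.parts = s + 1)).card
        = (Finset.univ.filter (fun Y : Nat.Partition i => Multiset.card Y.parts ≤ s)).card := by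
      congr 1
      apply Finset.filter_congr
      intro Y _
      omega
    have hBeq2 : (Finset.univ.filter (fun Y : Nat.Partition i =>
        Multiset.card Y.parts ≤ s + 1 ∧ Multiset.card Y.parts = s + 1)).card
        = (Finset.univ.filter (fun Y : Nat.Partition i => Multiset.card Y.parts = s + 1)).card := by
      congr 1
      apply Finset.filter_congr
      intro Y _
      omega
    rcases le_or_gt (s+1) i with hsi | hsi
    · have hlt : i - (s+1) < i := by omega
      have key := IH (i - (s+1)) hlt (s+1)
      rw [splitA, splitB, hAeq, hBeq, hBeq2, IHs]
      have hA : (Finset.univ.filter (fun Y : Nat.Partition i =>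
          Y.parts.sup ≤ s + 1 ∧ (s+1) ∈ Y.parts)).card
          = (Finset.univ.filter (fun Y : Nat.Partition i =>
          Multiset.card Y.parts = s + 1)).card := by
        rw [cardA_step i s hsi, cardB_step i s hsi, key]
      omega
    · rw [splitA, splitB, hAeq, hBeq, hBeq2, IHs]
      have hA0 : (Finset.univ.filter (fun Y : Nat.Partition i =>
          Y.parts.sup ≤ s + 1 ∧ (s+1) ∈ Y.parts)).card = 0 := by
        rw [Finset.card_eq_zero, Finset.filter_eq_empty_iff]
        rintro Y _ ⟨_, hmem⟩
        have h2 := Multiset.single_le_sum (fun x _ => Nat.zero_le x) _ hmem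
        rw [Y.parts_sum] at h2
        omega
      have hB0 : (Finset.univ.filter (fun Y : Nat.Partition i =>
          Multiset.card Y.parts = s + 1)).card = 0 := by
        rw [Finset.card_eq_zero, Finset.filter_eq_empty_iff]
        intro Y _ hc
        have := partition_card_le i Y
        omega
      omega

lemma fiber_eq (i s : ℕ) :
    (Finset.univ.filter (fun Y : Nat.Partition i => Y.parts.sup = s)).card
      = (Finset.univ.filter (fun Y : Nat.Partition i => Multiset.card Y.parts = s)).card := by
  cases s with
  | zero =>
    have h1 : (Finset.univ.filter (fun Y : Nat.Partition i => Y.parts.sup = 0)).card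
        = (Finset.univ.filter (fun Y : Nat.Partition i => Y.parts.sup ≤ 0)).card := by
      congr 1; apply Finset.filter_congr; intro Y _; omega
    have h2 : (Finset.univ.filter (fun Y : Nat.Partition i => Multiset.card Y.parts = 0)).card
        = (Finset.univ.filter (fun Y : Nat.Partition i => Multiset.card Y.parts ≤ 0)).card := by
      congr 1; apply Finset.filter_congr; intro Y _; omega
    rw [h1, h2, cA_eq_cB]
  | succ s =>
    have splitA : (Finset.univ.filter (fun Y : Nat.Partition i => Y.parts.sup ≤ s + 1)).card
        = (Finset.univ.filter (fun Y : Nat.Partition i =>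
            Y.parts.sup ≤ s + 1 ∧ Y.parts.sup = s + 1)).card
          + (Finset.univ.filter (fun Y : Nat.Partition i =>
            Y.parts.sup ≤ s + 1 ∧ ¬ Y.parts.sup = s + 1)).card := card_filter_split _ _
    have splitB : (Finset.univ.filter (fun Y : Nat.Partition i => Multiset.card Y.parts ≤ s + 1)).card
        = (Finset.univ.filter (fun Y : Nat.Partition i =>
            Multiset.card Y.parts ≤ s + 1 ∧ Multiset.card Y.parts = s + 1)).card
          + (Finset.univ.filter (fun Y : Nat.Partition i =>
            Multiset.card Y.parts ≤ s + 1 ∧ ¬ Multiset.card Y.parts = s + 1)).card :=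
      card_filter_split _ _
    have eA1 : (Finset.univ.filter (fun Y : Nat.Partition i =>
        Y.parts.sup ≤ s + 1 ∧ Y.parts.sup = s + 1)).card
        = (Finset.univ.filter (fun Y : Nat.Partition i => Y.parts.sup = s + 1)).card := by
      congr 1; apply Finset.filter_congr; intro Y _; omega
    have eA2 : (Finset.univ.filter (fun Y : Nat.Partition i =>
        Y.parts.sup ≤ s + 1 ∧ ¬ Y.parts.sup = s + 1)).card
        = (Finset.univ.filter (fun Y : Nat.Partition i => Y.parts.sup ≤ s)).card := by
      congr 1; apply Finset.filter_congr; intro Y _; omega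
    have eB1 : (Finset.univ.filter (fun Y : Nat.Partition i =>
        Multiset.card Y.parts ≤ s + 1 ∧ Multiset.card Y.parts = s + 1)).card
        = (Finset.univ.filter (fun Y : Nat.Partition i => Multiset.card Y.parts = s + 1)).card := by
      congr 1; apply Finset.filter_congr; intro Y _; omega
    have eB2 : (Finset.univ.filter (fun Y : Nat.Partition i =>
        Multiset.card Y.parts ≤ s + 1 ∧ ¬ Multiset.card Y.parts = s + 1)).card
        = (Finset.univ.filter (fun Y : Nat.Partition i => Multiset.card Y.parts ≤ s)).card := by
      congr 1; apply Finset.filter_congr; intro Y _; omega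
    have k1 := cA_eq_cB i (s+1)
    have k2 := cA_eq_cB i s
    omega

lemma sum_sup_eq_sum_card {β : Type*} [AddCommMonoid β] (i : ℕ) (g : ℕ → β) :
    ∑ Y : Nat.Partition i, g Y.parts.sup = ∑ Y : Nat.Partition i, g (Multiset.card Y.parts) := by
  have hA : ∀ Y : Nat.Partition i, Y ∈ Finset.univ → Y.parts.sup ∈ Finset.range (i+1) :=
    fun Y _ => Finset.mem_range.mpr (by have := partition_sup_le i Y; omega)
  have hB : ∀ Y : Nat.Partition i, Y ∈ Finset.univ → Multiset.card Y.parts ∈ Finset.range (i+1) :=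
    fun Y _ => Finset.mem_range.mpr (by have := partition_card_le i Y; omega)
  rw [← Finset.sum_fiberwise_of_maps_to hA (fun Y => g Y.parts.sup),
    ← Finset.sum_fiberwise_of_maps_to hB (fun Y => g (Multiset.card Y.parts))]
  apply Finset.sum_congr rfl
  intro s _
  have h1 : ∑ Y ∈ Finset.univ.filter (fun Y : Nat.Partition i => Y.parts.sup = s),
      g Y.parts.sup = (Finset.univ.filter (fun Y : Nat.Partition i => Y.parts.sup = s)).card • g s := by
    rw [Finset.sum_congr rfl (fun Y hY => by rw [(Finset.mem_filter.mp hY).2]), Finset.sum_const]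
  have h2 : ∑ Y ∈ Finset.univ.filter (fun Y : Nat.Partition i => Multiset.card Y.parts = s),
      g (Multiset.card Y.parts)
      = (Finset.univ.filter (fun Y : Nat.Partition i => Multiset.card Y.parts = s)).card • g s := by
    rw [Finset.sum_congr rfl (fun Y hY => by rw [(Finset.mem_filter.mp hY).2]), Finset.sum_const]
  rw [h1, h2, fiber_eq]


/-- For every `m ≥ 0`, as an identity of formal power series in `q` over `ℤ[t]`
(stated coefficientwise; the factors with `d > N` of the first infinite product do not
affect the coefficient of `q^N`): the sum over pairs of partitions `(Y¹,Y²)` with `Y²`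
having largest part at most `m` of `t^{2(|Y¹|+|Y²|−l(Y¹))} q^{|Y¹|+|Y²|}` equals
`(∏_{d=1}^{∞} 1/(1 − t^{2d−2} q^{d})) · (∏_{d=1}^{m} 1/(1 − t^{2d} q^{d}))`. -/
theorem genfun_pairs_eq_product (m N : ℕ) :
    (∑ i ∈ Finset.range (N + 1), ∑ Y1 : Nat.Partition i, ∑ Y2 : Nat.Partition (N - i),
        if Y2.parts.sup ≤ m then
          (Polynomial.X : Polynomial ℤ) ^ (2 * (N - Y1.parts.sup)) else 0) =
      PowerSeries.coeff (R := Polynomial ℤ) N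
        ((∏ d ∈ Finset.Icc 1 N, invFac (2 * d - 2) d) *
          ∏ d ∈ Finset.Icc 1 m, invFac (2 * d) d) := by
  rw [PowerSeries.coeff_mul, Finset.Nat.sum_antidiagonal_eq_sum_range_succ_mk]
  apply Finset.sum_congr rfl
  intro i hi
  have hiN : i ≤ N := by have := Finset.mem_range.mp hi; omega
  dsimp only
  rw [coeff_prod_invFac (fun d => 2 * d - 2) N i, coeff_prod_invFac (fun d => 2 * d) m (N - i)]
  have hAterm : ∀ Z : Nat.Partition i,
      (if Z.parts.sup ≤ N then (Polynomial.X : Polynomial ℤ)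
          ^ (∑ d ∈ Finset.Icc 1 N, (2 * d - 2) * Z.parts.count d) else 0)
      = (Polynomial.X : Polynomial ℤ) ^ (∑ d ∈ Finset.Icc 1 N, (2 * d - 2) * Z.parts.count d) :=
    fun Z => if_pos (le_trans (partition_sup_le i Z) hiN)
  rw [Finset.sum_congr rfl (fun Z _ => hAterm Z), Finset.sum_mul_sum]
  have lhs_eq : (∑ Y1 : Nat.Partition i, ∑ Y2 : Nat.Partition (N - i),
        if Y2.parts.sup ≤ m then
          (Polynomial.X : Polynomial ℤ) ^ (2 * (N - Y1.parts.sup)) else 0)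
      = ∑ Z : Nat.Partition i, ∑ Y2 : Nat.Partition (N - i),
        if Y2.parts.sup ≤ m then
          (Polynomial.X : Polynomial ℤ) ^ (2 * (N - Multiset.card Z.parts)) else 0 :=
    sum_sup_eq_sum_card i (fun s => ∑ Y2 : Nat.Partition (N - i),
      if Y2.parts.sup ≤ m then (Polynomial.X : Polynomial ℤ) ^ (2 * (N - s)) else 0)
  rw [lhs_eq]
  apply Finset.sum_congr rfl
  intro Z _
  apply Finset.sum_congr rfl
  intro Y2 _
  rw [mul_ite, mul_zero]
  by_cases hY2 : Y2.parts.sup ≤ m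
  · rw [if_pos hY2, if_pos hY2, ← pow_add]
    congr 1
    -- exponent arithmetic
    have hZmem : ∀ a ∈ Z.parts, a ∈ Finset.Icc 1 N := fun a ha =>
      Finset.mem_Icc.mpr ⟨Z.parts_pos ha,
        le_trans (le_trans (Multiset.le_sup ha) (partition_sup_le i Z)) hiN⟩
    have h1 : ∑ d ∈ Finset.Icc 1 N, Z.parts.count d * d = i := by
      rw [msum_count _ _ hZmem, Z.parts_sum]
    have h2 : ∑ d ∈ Finset.Icc 1 N, Z.parts.count d = Multiset.card Z.parts :=
      mcard_count _ _ hZmem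
    have hEA : (∑ d ∈ Finset.Icc 1 N, (2 * d - 2) * Z.parts.count d)
        + 2 * Multiset.card Z.parts = 2 * i := by
      rw [← h2, Finset.mul_sum, ← Finset.sum_add_distrib]
      rw [Finset.sum_congr rfl (fun d hd => ?_), ← Finset.mul_sum, h1]
      have hd1 : 1 ≤ d := (Finset.mem_Icc.mp hd).1
      obtain ⟨e, rfl⟩ : ∃ e, d = e + 1 := ⟨d - 1, by omega⟩
      have he : 2 * (e + 1) - 2 = 2 * e := by omega
      rw [he]
      ring
    have hY2mem : ∀ a ∈ Y2.parts, a ∈ Finset.Icc 1 m := fun a ha =>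
      Finset.mem_Icc.mpr ⟨Y2.parts_pos ha, le_trans (Multiset.le_sup ha) hY2⟩
    have h3 : ∑ d ∈ Finset.Icc 1 m, Y2.parts.count d * d = N - i := by
      rw [msum_count _ _ hY2mem, Y2.parts_sum]
    have hEB : (∑ d ∈ Finset.Icc 1 m, 2 * d * Y2.parts.count d) = 2 * (N - i) := by
      rw [Finset.sum_congr rfl (fun d hd => by ring :
          ∀ d ∈ Finset.Icc 1 m, 2 * d * Y2.parts.count d = 2 * (Y2.parts.count d * d)),
        ← Finset.mul_sum, h3]
    have hcard : Multiset.card Z.parts ≤ i := partition_card_le i Z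
    omega
  · rw [if_neg hY2, if_neg hY2]
end

section
/- As an identity of formal power series: the sum over all pairs of partitions (Y¹,Y²) of t^{2(|Y¹|−l(Y¹))} t^{2|Y²|} q^{|Y¹|+|Y²|} equals (∏_{d=1}^{∞} 1/(1 − t^{2d−2} q^{d})) · (∏_{d=1}^{∞} 1/(1 − t^{2d} q^{d})) in ℤ[t][[q]]. -/
open scoped Classical

open Multiset

namespace GB

/-- Number of parts of `s` that are `> j`. -/
def Np (s : Multiset ℕ) (j : ℕ) : ℕ := (s.filter (fun p => j < p)).card

lemma Np_anti (s : Multiset ℕ) {j k : ℕ} (h : j ≤ k) : Np s k ≤ Np s j :=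
  Multiset.card_le_card (Multiset.monotone_filter_right s (fun p hp => lt_of_le_of_lt h hp))

/-- Conjugate multiset. -/
def conjM (s : Multiset ℕ) : Multiset ℕ :=
  ((Finset.range s.sup).val.map (fun j => Np s j)).filter (fun p => 0 < p)

lemma conjM_pos {s : Multiset ℕ} {p : ℕ} (hp : p ∈ conjM s) : 0 < p :=
  Multiset.of_mem_filter hp

lemma Np_conjM (s : Multiset ℕ) (i : ℕ) :
    Np (conjM s) i = ((Finset.range s.sup).filter (fun j => i < Np s j)).card := by
  unfold Np conjM
  rw [Multiset.filter_filter]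
  have h1 : Multiset.filter (fun a => i < a ∧ 0 < a)
      ((Finset.range s.sup).val.map (fun j => Np s j))
      = Multiset.filter (fun a => i < a) ((Finset.range s.sup).val.map (fun j => Np s j)) :=
    Multiset.filter_congr (fun x _ => by omega)
  rw [h1, Multiset.filter_map, Multiset.card_map]
  rfl

lemma lt_Np_conjM_iff {s : Multiset ℕ} {i j : ℕ} :
    j < Np (conjM s) i ↔ i < Np s j := by
  rw [Np_conjM]
  constructor
  · intro h
    by_contra hc
    push_neg at hc
    have hsub : (Finset.range s.sup).filter (fun k => i < Np s k) ⊆ Finset.range j := by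
      intro k hk
      simp only [Finset.mem_filter, Finset.mem_range] at hk ⊢
      by_contra hkj
      push_neg at hkj
      exact absurd (lt_of_lt_of_le hk.2 (Np_anti s hkj)) (by omega)
    have := Finset.card_le_card hsub
    simp only [Finset.card_range] at this
    omega
  · intro h
    have hjsup : j < s.sup := by
      have : 0 < Np s j := by omega
      obtain ⟨p, hp⟩ := Multiset.card_pos_iff_exists_mem.1 (by unfold Np at this; exact this)
      have hps := Multiset.of_mem_filter hp
      exact lt_of_lt_of_le hps (Multiset.le_sup (Multiset.mem_of_mem_filter hp))
    have hsub : Finset.range (j + 1) ⊆ (Finset.range s.sup).filter (fun k => i < Np s k) := by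
      intro k hk
      simp only [Finset.mem_range] at hk
      simp only [Finset.mem_filter, Finset.mem_range]
      exact ⟨by omega, lt_of_lt_of_le h (Np_anti s (by omega))⟩
    have := Finset.card_le_card hsub
    simp only [Finset.card_range] at this
    omega

lemma Np_cons (a : ℕ) (s : Multiset ℕ) (j : ℕ) :
    Np (a ::ₘ s) j = Np s j + (if j < a then 1 else 0) := by
  unfold Np
  rw [Multiset.filter_cons]
  split_ifs with h <;> simp [h]

lemma Np_succ_add_count (s : Multiset ℕ) (j : ℕ) :
    Np s j = Np s (j + 1) + s.count (j + 1) := by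
  induction s using Multiset.induction with
  | empty => simp [Np]
  | cons a s ih =>
    rw [Np_cons, Np_cons, Multiset.count_cons, ih]
    split_ifs <;> omega

lemma eq_of_Np {s t : Multiset ℕ} (hs : ∀ p ∈ s, 0 < p) (ht : ∀ p ∈ t, 0 < p)
    (h : ∀ j, Np s j = Np t j) : s = t := by
  ext v
  match v with
  | 0 =>
    rw [Multiset.count_eq_zero_of_notMem, Multiset.count_eq_zero_of_notMem]
    · intro hv; exact absurd (ht 0 hv) (by omega)
    · intro hv; exact absurd (hs 0 hv) (by omega)
  | w + 1 =>
    have h1 := Np_succ_add_count s w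
    have h2 := Np_succ_add_count t w
    have h3 := h w
    have h4 := h (w + 1)
    omega

lemma Np_conjM_conjM (s : Multiset ℕ) (j : ℕ) : Np (conjM (conjM s)) j = Np s j := by
  have key : ∀ i, i < Np (conjM (conjM s)) j ↔ i < Np s j := by
    intro i
    rw [lt_Np_conjM_iff, lt_Np_conjM_iff]
  have h1 := key (Np (conjM (conjM s)) j)
  have h2 := key (Np s j)
  omega

lemma conjM_conjM {s : Multiset ℕ} (hs : ∀ p ∈ s, 0 < p) : conjM (conjM s) = s :=
  eq_of_Np (fun _ h => conjM_pos h) hs (Np_conjM_conjM s)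

lemma sum_range_Np (s : Multiset ℕ) (M : ℕ) (hM : ∀ p ∈ s, p ≤ M) :
    ∑ j ∈ Finset.range M, Np s j = s.sum := by
  induction s using Multiset.induction with
  | empty => simp [Np]
  | cons a s ih =>
    have ha : a ≤ M := hM a (Multiset.mem_cons_self a s)
    simp only [Np_cons, Finset.sum_add_distrib, Multiset.sum_cons]
    rw [ih (fun p hp => hM p (Multiset.mem_cons_of_mem hp)), Finset.sum_boole]
    have : (Finset.range M).filter (fun j => j < a) = Finset.range a := by
      ext k; simp only [Finset.mem_filter, Finset.mem_range]; omega
    rw [this, Finset.card_range]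
    push_cast
    omega

lemma sum_conjM (s : Multiset ℕ) : (conjM s).sum = s.sum := by
  unfold conjM
  have hsplit := congrArg Multiset.sum
    (Multiset.filter_add_not (fun p => 0 < p) ((Finset.range s.sup).val.map (fun j => Np s j)))
  rw [Multiset.sum_add] at hsplit
  have hz : (((Finset.range s.sup).val.map (fun j => Np s j)).filter (fun p => ¬0 < p)).sum = 0 := by
    apply Multiset.sum_eq_zero
    intro x hx
    have := Multiset.of_mem_filter hx
    omega
  have hmap : ((Finset.range s.sup).val.map (fun j => Np s j)).sum = s.sum := by
    rw [← Finset.sum_eq_multiset_sum]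
    exact sum_range_Np s s.sup (fun p hp => Multiset.le_sup hp)
  omega

lemma sup_conjM {s : Multiset ℕ} (hs : ∀ p ∈ s, 0 < p) : (conjM s).sup = Multiset.card s := by
  by_cases h0 : s = 0
  · subst h0; simp [conjM, Np]
  · obtain ⟨a, ha⟩ := Multiset.exists_mem_of_ne_zero h0
    have hsup : 0 < s.sup := lt_of_lt_of_le (hs a ha) (Multiset.le_sup ha)
    have hNp0 : Np s 0 = Multiset.card s := by
      unfold Np
      congr 1
      exact Multiset.filter_eq_self.2 hs
    apply le_antisymm
    · rw [Multiset.sup_le]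
      intro b hb
      have hb' := Multiset.mem_of_mem_filter hb
      obtain ⟨j, _, rfl⟩ := Multiset.mem_map.1 hb'
      rw [← hNp0]
      exact Np_anti s (Nat.zero_le j)
    · apply Multiset.le_sup
      rw [← hNp0]
      apply Multiset.mem_filter.2
      constructor
      · apply Multiset.mem_map.2
        exact ⟨0, by rw [Finset.mem_val]; exact Finset.mem_range.2 hsup, rfl⟩
      · rw [hNp0]
        exact Multiset.card_pos.2 h0



lemma geom_key (a d : ℕ) (hd : 0 < d) (m : ℕ) :
    (if d ∣ m then (Polynomial.X : Polynomial ℤ) ^ (a * (m / d)) else 0) -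
      Polynomial.X ^ a *
        (if d ≤ m then
          (if d ∣ m - d then (Polynomial.X : Polynomial ℤ) ^ (a * ((m - d) / d)) else 0)
          else 0)
      = (if m = 0 then 1 else 0) := by
  by_cases hm : m = 0
  · subst hm
    rw [if_pos rfl, if_pos (dvd_zero d), if_neg (by omega), Nat.zero_div, mul_zero, pow_zero]
    simp
  · rw [if_neg hm]
    by_cases hdm : d ≤ m
    · rw [if_pos hdm]
      by_cases hdvd : d ∣ m
      · obtain ⟨k, rfl⟩ := hdvd
        have hk : 1 ≤ k := Nat.pos_of_ne_zero (fun h => hm (by rw [h, mul_zero]))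
        have hdvd2 : d ∣ d * k - d := ⟨k - 1, by cases k with
          | zero => omega
          | succ k' => simp [Nat.mul_succ]⟩
        rw [if_pos ⟨k, rfl⟩, if_pos hdvd2]
        have h1 : d * k - d = d * (k - 1) := by cases k with
          | zero => omega
          | succ k' => simp [Nat.mul_succ]
        rw [h1, Nat.mul_div_cancel_left _ hd, Nat.mul_div_cancel_left _ hd, ← pow_add]
        have h2 : a + a * (k - 1) = a * k := by
          cases k with
          | zero => omega
          | succ k' => rw [Nat.succ_sub_one, Nat.mul_succ]; omega
        rw [h2, sub_self]
      · have hdvd' : ¬ d ∣ m - d := by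
          intro hc
          have := Nat.dvd_add hc (dvd_refl d)
          rw [Nat.sub_add_cancel hdm] at this
          exact hdvd this
        rw [if_neg hdvd, if_neg hdvd', mul_zero, sub_zero]
    · rw [if_neg hdm, mul_zero, sub_zero,
        if_neg (fun hc => hdm (Nat.le_of_dvd (by omega) hc))]

lemma coeff_invFac (a d : ℕ) (hd : 0 < d) (n : ℕ) :
    PowerSeries.coeff (R := Polynomial ℤ) n (invFac a d)
      = if d ∣ n then (Polynomial.X : Polynomial ℤ) ^ (a * (n / d)) else 0 := by
  set u : PowerSeries (Polynomial ℤ) :=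
    1 - PowerSeries.C (R := Polynomial ℤ) (Polynomial.X ^ a) * PowerSeries.X ^ d with hu
  set S : PowerSeries (Polynomial ℤ) :=
    PowerSeries.mk (fun m => if d ∣ m then (Polynomial.X : Polynomial ℤ) ^ (a * (m / d)) else 0)
    with hS
  have hcc : PowerSeries.constantCoeff (R := Polynomial ℤ) u = 1 := by
    rw [hu]
    simp [zero_pow hd.ne']
  have hmul : u * S = 1 := by
    refine PowerSeries.ext fun m => ?_
    rw [hu, sub_mul, one_mul, map_sub, mul_assoc, PowerSeries.coeff_C_mul,
      PowerSeries.coeff_X_pow_mul', hS]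
    simp only [PowerSeries.coeff_mk, PowerSeries.coeff_one]
    exact geom_key a d hd m
  have hinv : u * invFac a d = 1 := PowerSeries.mul_invOfUnit u 1 (by rw [hcc]; rfl)
  have hSeq : S = invFac a d := by
    calc S = S * (u * invFac a d) := by rw [hinv, mul_one]
    _ = (u * S) * invFac a d := by ring
    _ = invFac a d := by rw [hmul, one_mul]
  rw [← hSeq, hS, PowerSeries.coeff_mk]

lemma sum_count_mul (s : Multiset ℕ) (F : Finset ℕ) (hF : ∀ p ∈ s, p ∈ F) :
    ∑ d ∈ F, d * s.count d = s.sum := by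
  induction s using Multiset.induction with
  | empty => simp
  | cons a s ih =>
    have ha := hF a (Multiset.mem_cons_self a s)
    simp only [Multiset.count_cons, Multiset.sum_cons, Nat.mul_add, Finset.sum_add_distrib]
    rw [ih (fun p hp => hF p (Multiset.mem_cons_of_mem hp))]
    have h2 : ∀ d : ℕ, d * (if d = a then 1 else 0) = (if d = a then d else 0) := by
      intro d; split_ifs <;> simp
    simp only [h2, Finset.sum_ite_eq', ha, if_true]
    omega

lemma sum_count_card (s : Multiset ℕ) (F : Finset ℕ) (hF : ∀ p ∈ s, p ∈ F) :
    ∑ d ∈ F, s.count d = Multiset.card s := by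
  induction s using Multiset.induction with
  | empty => simp
  | cons a s ih =>
    have ha := hF a (Multiset.mem_cons_self a s)
    simp only [Multiset.count_cons, Multiset.card_cons, Finset.sum_add_distrib]
    rw [ih (fun p hp => hF p (Multiset.mem_cons_of_mem hp))]
    simp only [Finset.sum_ite_eq', ha, if_true]

lemma card_le_sum {s : Multiset ℕ} (hs : ∀ p ∈ s, 0 < p) : Multiset.card s ≤ s.sum := by
  induction s using Multiset.induction with
  | empty => simp
  | cons a s ih =>
    simp only [Multiset.card_cons, Multiset.sum_cons]
    have h1 := hs a (Multiset.mem_cons_self a s)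
    have h2 := ih (fun p hp => hs p (Multiset.mem_cons_of_mem hp))
    omega

def msetOf (N : ℕ) (l : ℕ →₀ ℕ) : Multiset ℕ :=
  (Finset.Icc 1 N).val.bind (fun d => Multiset.replicate (l d / d) d)

lemma count_msetOf (N : ℕ) (l : ℕ →₀ ℕ) (e : ℕ) :
    (msetOf N l).count e = if e ∈ Finset.Icc 1 N then l e / e else 0 := by
  rw [msetOf, Multiset.count_bind]
  simp only [Multiset.count_replicate]
  rw [← Finset.sum_eq_multiset_sum, Finset.sum_ite_eq']

lemma mem_msetOf {N : ℕ} {l : ℕ →₀ ℕ} {e : ℕ} (he : e ∈ msetOf N l) :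
    e ∈ Finset.Icc 1 N := by
  rw [msetOf, Multiset.mem_bind] at he
  obtain ⟨d, hd, he⟩ := he
  rw [Multiset.eq_of_mem_replicate he]
  exact hd

lemma sum_msetOf (N : ℕ) (l : ℕ →₀ ℕ) (hdvd : ∀ d ∈ Finset.Icc 1 N, d ∣ l d) :
    (msetOf N l).sum = ∑ d ∈ Finset.Icc 1 N, l d := by
  rw [msetOf, Multiset.sum_bind, ← Finset.sum_eq_multiset_sum]
  apply Finset.sum_congr rfl
  intro d hd
  rw [Multiset.sum_replicate, smul_eq_mul, Nat.div_mul_cancel (hdvd d hd)]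

noncomputable def finsuppOf (s : Multiset ℕ) : ℕ →₀ ℕ :=
  Finsupp.onFinset s.toFinset (fun d => d * s.count d)
    (fun d hd => by
      rw [Multiset.mem_toFinset]
      by_contra hc
      exact hd (by show d * s.count d = 0; rw [Multiset.count_eq_zero.2 hc, mul_zero]))

lemma finsuppOf_apply (s : Multiset ℕ) (d : ℕ) : finsuppOf s d = d * s.count d := rfl

/-- The divisibility condition, with a fixed decidability instance. -/
def divCond (N : ℕ) (l : ℕ →₀ ℕ) : Prop := ∀ d ∈ Finset.Icc 1 N, d ∣ l d

instance divCondDec (N : ℕ) : DecidablePred (divCond N) := fun l => by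
  unfold divCond; infer_instance

def partOf (N n : ℕ) (l : ℕ →₀ ℕ)
    (hl : l ∈ (Finset.finsuppAntidiag (Finset.Icc 1 N) n).filter (divCond N)) :
    Nat.Partition n where
  parts := msetOf N l
  parts_pos := fun hi => (Finset.mem_Icc.1 (mem_msetOf hi)).1
  parts_sum := by
    have h1 := (Finset.mem_finsuppAntidiag.1 (Finset.mem_filter.1 hl).1).1
    exact (sum_msetOf N l (Finset.mem_filter.1 hl).2).trans h1

lemma parts_mem_Icc {N n : ℕ} (hn : n ≤ N) (Y : Nat.Partition n) :
    ∀ p ∈ Y.parts, p ∈ Finset.Icc 1 N := by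
  intro p hp
  refine Finset.mem_Icc.2 ⟨Y.parts_pos hp, ?_⟩
  calc p ≤ Y.parts.sum := Multiset.single_le_sum (fun x _ => Nat.zero_le x) p hp
  _ = n := Y.parts_sum
  _ ≤ N := hn

lemma coeff_prod_invFac (e : ℕ → ℕ) (N n : ℕ) (hn : n ≤ N) :
    (PowerSeries.coeff (R := Polynomial ℤ) n (∏ d ∈ Finset.Icc 1 N, invFac (e d) d))
      = ∑ Y : Nat.Partition n,
          (Polynomial.X : Polynomial ℤ) ^ (∑ d ∈ Finset.Icc 1 N, e d * Y.parts.count d) := by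
  rw [PowerSeries.coeff_prod]
  rw [Finset.sum_congr rfl (fun l (_ : l ∈ Finset.finsuppAntidiag (Finset.Icc 1 N) n) =>
    Finset.prod_congr rfl
      (fun d hd => coeff_invFac (e d) d (Finset.mem_Icc.1 hd).1 (l d)))]
  rw [← Finset.sum_filter_of_ne (p := divCond N)
    (fun l _ h d hd => by
      by_contra hc
      exact h (Finset.prod_eq_zero hd (by rw [if_neg hc])))]
  refine Finset.sum_bij' (fun l hl => partOf N n l hl)
    (fun Y _ => finsuppOf Y.parts) (fun l hl => Finset.mem_univ _) ?_ ?_ ?_ ?_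
  · -- hj
    intro Y _
    show finsuppOf Y.parts ∈ _
    rw [Finset.mem_filter]
    refine ⟨Finset.mem_finsuppAntidiag.2 ⟨?_, ?_⟩, ?_⟩
    · rw [Finset.sum_congr rfl (fun d _ => finsuppOf_apply Y.parts d),
        sum_count_mul Y.parts _ (parts_mem_Icc hn Y), Y.parts_sum]
    · refine subset_trans Finsupp.support_onFinset_subset ?_
      intro d hd
      exact parts_mem_Icc hn Y d (Multiset.mem_toFinset.1 hd)
    · intro d _
      rw [finsuppOf_apply]
      exact dvd_mul_right d _
  · -- left_inv
    intro l hl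
    show finsuppOf (partOf N n l hl).parts = l
    ext d
    rw [finsuppOf_apply]
    show d * (msetOf N l).count d = l d
    rw [count_msetOf]
    by_cases hd : d ∈ Finset.Icc 1 N
    · rw [if_pos hd, Nat.mul_div_cancel' ((Finset.mem_filter.1 hl).2 d hd)]
    · rw [if_neg hd, mul_zero]
      by_contra hc
      exact hd ((Finset.mem_finsuppAntidiag.1 (Finset.mem_filter.1 hl).1).2
        (Finsupp.mem_support_iff.2 (fun h => hc h.symm)))
  · -- right_inv
    intro Y hY
    apply Nat.Partition.ext
    show msetOf N (finsuppOf Y.parts) = Y.parts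
    ext c
    rw [count_msetOf, finsuppOf_apply]
    by_cases hc : c ∈ Finset.Icc 1 N
    · rw [if_pos hc, Nat.mul_div_cancel_left _ (by have := (Finset.mem_Icc.1 hc).1; omega)]
    · rw [if_neg hc]
      symm
      rw [Multiset.count_eq_zero]
      exact fun hcc => hc (parts_mem_Icc hn Y c hcc)
  · -- h
    intro l hl
    rw [Finset.prod_congr rfl (fun d hd => if_pos ((Finset.mem_filter.1 hl).2 d hd))]
    rw [Finset.prod_pow_eq_pow_sum]
    congr 1
    apply Finset.sum_congr rfl
    intro d hd
    show e d * (l d / d) = e d * (partOf N n l hl).parts.count d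
    rw [show (partOf N n l hl).parts = msetOf N l from rfl, count_msetOf, if_pos hd]


lemma lemA (N n : ℕ) (hn : n ≤ N) :
    PowerSeries.coeff (R := Polynomial ℤ) n (∏ d ∈ Finset.Icc 1 N, invFac (2 * d) d)
      = ∑ _Y : Nat.Partition n, (Polynomial.X : Polynomial ℤ) ^ (2 * n) := by
  rw [coeff_prod_invFac (fun d => 2 * d) N n hn]
  apply Finset.sum_congr rfl
  intro Y _
  congr 1
  calc ∑ d ∈ Finset.Icc 1 N, 2 * d * Y.parts.count d
      = 2 * ∑ d ∈ Finset.Icc 1 N, d * Y.parts.count d := by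
        rw [Finset.mul_sum]
        exact Finset.sum_congr rfl (fun d _ => by ring)
    _ = 2 * n := by rw [sum_count_mul Y.parts _ (parts_mem_Icc hn Y), Y.parts_sum]

def conjP {n : ℕ} (Y : Nat.Partition n) : Nat.Partition n where
  parts := conjM Y.parts
  parts_pos := fun hi => conjM_pos hi
  parts_sum := (sum_conjM Y.parts).trans Y.parts_sum

lemma conjP_bijective (n : ℕ) : Function.Bijective (conjP (n := n)) :=
  Function.Involutive.bijective
    (fun Y => Nat.Partition.ext (conjM_conjM (fun p hp => Y.parts_pos hp)))

lemma lemB (N n : ℕ) (hn : n ≤ N) :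
    PowerSeries.coeff (R := Polynomial ℤ) n (∏ d ∈ Finset.Icc 1 N, invFac (2 * d - 2) d)
      = ∑ Y : Nat.Partition n,
          (Polynomial.X : Polynomial ℤ) ^ (2 * (n - Y.parts.sup)) := by
  rw [coeff_prod_invFac (fun d => 2 * d - 2) N n hn]
  have hcard : ∀ Y : Nat.Partition n,
      (∑ d ∈ Finset.Icc 1 N, (2 * d - 2) * Y.parts.count d)
        = 2 * (n - Multiset.card Y.parts) := by
    intro Y
    have hmem := parts_mem_Icc hn Y
    have h1 : (∑ d ∈ Finset.Icc 1 N, (2 * d - 2) * Y.parts.count d)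
        + 2 * ∑ d ∈ Finset.Icc 1 N, Y.parts.count d
        = 2 * ∑ d ∈ Finset.Icc 1 N, d * Y.parts.count d := by
      rw [Finset.mul_sum, Finset.mul_sum, ← Finset.sum_add_distrib]
      apply Finset.sum_congr rfl
      intro d hd
      have hd1 : 1 ≤ d := (Finset.mem_Icc.1 hd).1
      have hds : 2 * d - 2 + 2 = 2 * d := by omega
      calc (2 * d - 2) * Y.parts.count d + 2 * Y.parts.count d
          = (2 * d - 2 + 2) * Y.parts.count d := (add_mul _ _ _).symm
        _ = 2 * d * Y.parts.count d := by rw [hds]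
        _ = 2 * (d * Y.parts.count d) := by ring
    have h2 := sum_count_card Y.parts _ hmem
    have h3 := sum_count_mul Y.parts _ hmem
    have h4 : Multiset.card Y.parts ≤ n := by
      have := card_le_sum (fun p hp => Y.parts_pos hp)
      rwa [Y.parts_sum] at this
    rw [h2, h3, Y.parts_sum] at h1
    omega
  rw [Finset.sum_congr rfl (fun Y _ => by rw [hcard Y])]
  exact Fintype.sum_bijective conjP (conjP_bijective n)
    (fun Y => (Polynomial.X : Polynomial ℤ) ^ (2 * (n - Multiset.card Y.parts)))
    (fun Y => (Polynomial.X : Polynomial ℤ) ^ (2 * (n - Y.parts.sup)))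
    (fun Y => by
      show (Polynomial.X : Polynomial ℤ) ^ (2 * (n - Multiset.card Y.parts))
        = (Polynomial.X : Polynomial ℤ) ^ (2 * (n - (conjP Y).parts.sup))
      rw [show (conjP Y).parts.sup = Multiset.card Y.parts from
        sup_conjM (fun p hp => Y.parts_pos hp)])

end GB

/-- Göttsche's formula for the blow-up, combinatorial form (stated coefficientwise;
the factors with `d > N` do not affect the coefficient of `q^N`): the sum over all
pairs of partitions `(Y¹,Y²)` of `t^{2(|Y¹|−l(Y¹))} t^{2|Y²|} q^{|Y¹|+|Y²|}` equals
`(∏_{d=1}^{∞} 1/(1 − t^{2d−2} q^{d})) · (∏_{d=1}^{∞} 1/(1 − t^{2d} q^{d}))`. -/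
theorem goettsche_blowup (N : ℕ) :
    (∑ i ∈ Finset.range (N + 1), ∑ Y1 : Nat.Partition i, ∑ _Y2 : Nat.Partition (N - i),
        (Polynomial.X : Polynomial ℤ) ^ (2 * (i - Y1.parts.sup)) *
          (Polynomial.X : Polynomial ℤ) ^ (2 * (N - i))) =
      PowerSeries.coeff (R := Polynomial ℤ) N
        ((∏ d ∈ Finset.Icc 1 N, invFac (2 * d - 2) d) *
          ∏ d ∈ Finset.Icc 1 N, invFac (2 * d) d) := by
  rw [PowerSeries.coeff_mul, Finset.Nat.sum_antidiagonal_eq_sum_range_succ_mk]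
  apply Finset.sum_congr rfl
  intro i hi
  have hiN : i ≤ N := Nat.lt_succ_iff.1 (Finset.mem_range.1 hi)
  rw [GB.lemB N i hiN, GB.lemA N (N - i) (Nat.sub_le N i), ← Finset.sum_mul_sum]
end

section
/- Fix N ≥ 0 and n ≥ 0. There is a bijection between: (i) pairs (I', I) of monomial ideals of ℂ[x,y] with I' ⊆ I, dim_ℂ ℂ[x,y]/I = N, dim_ℂ I/I' = n, and I/I' a trivial ℂ[x,y]-module (annihilated by x and y); and (ii) pairs (Y, S) where Y is a Young diagram with N + n boxes and S is a set of n removable boxes of Y. The bijection sends (I',I) to Y = Y(I') and S = {(a,b) : x^a y^b ∈ I \ I'}. -/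
open scoped Classical

/-- An ideal of `ℂ[x,y]` is a monomial ideal if it is generated by monomials. -/
def IsMonomialIdeal (J : Ideal (MvPolynomial (Fin 2) ℂ)) : Prop :=
  ∃ S : Set (Fin 2 →₀ ℕ),
    J = Ideal.span ((fun d => MvPolynomial.monomial d (1 : ℂ)) '' S)

open MvPolynomial

namespace FPB

noncomputable section

abbrev Rc : Type := MvPolynomial (Fin 2) ℂ

def em (c : ℕ × ℕ) : Fin 2 →₀ ℕ := Finsupp.single 0 c.1 + Finsupp.single 1 c.2

def dm (d : Fin 2 →₀ ℕ) : ℕ × ℕ := (d 0, d 1)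

@[simp] lemma em_zero (c : ℕ × ℕ) : em c 0 = c.1 := by simp [em]
@[simp] lemma em_one (c : ℕ × ℕ) : em c 1 = c.2 := by
  simp [em, Finsupp.single_apply]

@[simp] lemma dm_em (c : ℕ × ℕ) : dm (em c) = c := by simp [dm]

@[simp] lemma em_dm (d : Fin 2 →₀ ℕ) : em (dm d) = d := by
  ext i
  fin_cases i <;> simp [dm]

lemma em_injective : Function.Injective em := by
  intro a b h
  rw [← dm_em a, ← dm_em b, h]

lemma le_iff_dm {d d' : Fin 2 →₀ ℕ} : d ≤ d' ↔ dm d ≤ dm d' := by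
  rw [Finsupp.le_def, Prod.le_def]
  constructor
  · intro h; exact ⟨h 0, h 1⟩
  · rintro ⟨h0, h1⟩ i; fin_cases i
    · exact h0
    · exact h1

lemma em_le_em {c c' : ℕ × ℕ} : em c ≤ em c' ↔ c ≤ c' := by
  rw [le_iff_dm, dm_em, dm_em]

lemma monomial_em (c : ℕ × ℕ) :
    (monomial (em c) (1 : ℂ) : Rc) = X (0 : Fin 2) ^ c.1 * X (1 : Fin 2) ^ c.2 := by
  rw [X_pow_eq_monomial, X_pow_eq_monomial, monomial_mul, one_mul]; rfl

/-- The set of exponents of monomials in `J`. -/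
def mset (J : Ideal Rc) : Set (Fin 2 →₀ ℕ) := {d | monomial d (1 : ℂ) ∈ J}

lemma mset_upper (J : Ideal Rc) : IsUpperSet (mset J) := by
  intro d d' h hd
  have : (monomial d' (1 : ℂ) : Rc) = monomial (d' - d) 1 * monomial d 1 := by
    rw [monomial_mul, one_mul, tsub_add_cancel_of_le h]
  show monomial d' (1 : ℂ) ∈ J
  rw [this]
  exact J.mul_mem_left _ hd

lemma span_mset {J : Ideal Rc} (h : IsMonomialIdeal J) :
    J = Ideal.span ((fun d => (monomial d (1 : ℂ) : Rc)) '' mset J) := by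
  obtain ⟨S, rfl⟩ := h
  apply le_antisymm
  · apply Ideal.span_mono
    apply Set.image_mono
    intro s hs
    exact Ideal.subset_span ⟨s, hs, rfl⟩
  · rw [Ideal.span_le]
    rintro _ ⟨d, hd, rfl⟩
    exact hd

lemma mem_iff {J : Ideal Rc} (h : IsMonomialIdeal J) (p : Rc) :
    p ∈ J ↔ ∀ d ∈ p.support, d ∈ mset J := by
  conv_lhs => rw [span_mset h]
  rw [MvPolynomial.mem_ideal_span_monomial_image]
  constructor
  · intro hp d hd
    obtain ⟨s, hs, hsd⟩ := hp d hd
    exact mset_upper J hsd hs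
  · intro hp d hd
    exact ⟨d, hp d hd, le_rfl⟩

lemma mset_span {U : Set (Fin 2 →₀ ℕ)} (hU : IsUpperSet U) :
    mset (Ideal.span ((fun d => (monomial d (1 : ℂ) : Rc)) '' U)) = U := by
  ext d
  simp only [mset, Set.mem_setOf_eq, MvPolynomial.mem_ideal_span_monomial_image]
  constructor
  · intro h
    have hd : d ∈ (monomial d (1 : ℂ) : Rc).support := by
      simp [MvPolynomial.support_monomial]
    obtain ⟨s, hs, hsd⟩ := h d hd
    exact hU hsd hs
  · intro hd xi hxi
    have : xi = d := by
      simpa [MvPolynomial.support_monomial] using hxi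
    exact ⟨d, hd, this ▸ le_rfl⟩

lemma restrict_eq {J : Ideal Rc} (h : IsMonomialIdeal J) :
    Submodule.restrictScalars ℂ (J : Submodule Rc Rc) = MvPolynomial.restrictSupport ℂ (mset J) := by
  ext p
  rw [Submodule.restrictScalars_mem, mem_iff h, MvPolynomial.mem_restrictSupport_iff]
  constructor
  · intro h' d hd; exact h' d hd
  · intro h' d hd; exact h' hd

/-- Quotient by a monomial ideal, as a `Finsupp` on the complement. -/
def quotEquiv {J : Ideal Rc} (h : IsMonomialIdeal J) :
    (Rc ⧸ J) ≃ₗ[ℂ] ((mset J)ᶜ : Set (Fin 2 →₀ ℕ)) →₀ ℂ := by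
  have hker : LinearMap.ker ((Finsupp.lsubtypeDomain (M := ℂ) (R := ℂ) ((mset J)ᶜ)) ∘ₗ
      (AddMonoidAlgebra.coeffLinearEquiv ℂ).toLinearMap)
      = Submodule.restrictScalars ℂ (J : Submodule Rc Rc) := by
    rw [restrict_eq h]
    ext p
    rw [LinearMap.mem_ker, MvPolynomial.mem_restrictSupport_iff]
    show Finsupp.subtypeDomain _ p.coeff = 0 ↔ _
    rw [Finsupp.subtypeDomain_eq_zero_iff']
    constructor
    · intro h' d hd
      by_contra hdm
      exact (Finsupp.mem_support_iff.mp hd) (h' d hdm)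
    · intro h' d hd
      by_contra hpd
      exact hd (h' (Finsupp.mem_support_iff.mpr hpd))
  have hsurj : Function.Surjective
      ((Finsupp.lsubtypeDomain (M := ℂ) (R := ℂ) ((mset J)ᶜ)) ∘ₗ
      (AddMonoidAlgebra.coeffLinearEquiv ℂ).toLinearMap) := by
    intro q
    exact ⟨(AddMonoidAlgebra.coeffLinearEquiv ℂ).symm q.extendDomain,
      by
        simp only [LinearMap.comp_apply, LinearEquiv.coe_coe, LinearEquiv.apply_symm_apply]
        exact Finsupp.subtypeDomain_extendDomain q⟩
  exact (Submodule.Quotient.restrictScalarsEquiv ℂ (J : Submodule Rc Rc)).symm.trans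
    (hker ▸ LinearMap.quotKerEquivOfSurjective _ hsurj)

lemma compl_finite {J : Ideal Rc} (h : IsMonomialIdeal J)
    (hfd : FiniteDimensional ℂ (Rc ⧸ J)) : ((mset J)ᶜ).Finite := by
  have : FiniteDimensional ℂ (((mset J)ᶜ : Set (Fin 2 →₀ ℕ)) →₀ ℂ) :=
    Module.Finite.equiv (quotEquiv h)
  have := Module.Finite.finite_basis (Finsupp.basisSingleOne
    (R := ℂ) (ι := ((mset J)ᶜ : Set (Fin 2 →₀ ℕ))))
  exact Set.finite_coe_iff.mp this

lemma quot_fd {J : Ideal Rc} (h : IsMonomialIdeal J)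
    (hfin : ((mset J)ᶜ).Finite) : FiniteDimensional ℂ (Rc ⧸ J) := by
  haveI := hfin.fintype
  exact Module.Finite.equiv (quotEquiv h).symm

lemma finrank_quot {J : Ideal Rc} (h : IsMonomialIdeal J)
    (hfin : ((mset J)ᶜ).Finite) :
    Module.finrank ℂ (Rc ⧸ J) = ((mset J)ᶜ).ncard := by
  haveI := hfin.fintype
  rw [(quotEquiv h).finrank_eq, Module.finrank_finsupp, Module.finrank_self, mul_one,
    ← Nat.card_eq_fintype_card, Nat.card_coe_set_eq]


lemma dm_injective : Function.Injective dm := by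
  intro a b h
  rw [← em_dm a, h, em_dm]

lemma mset_mono {I' I : Ideal Rc} (h : I' ≤ I) : mset I' ⊆ mset I :=
  fun _ hd => h hd

lemma ideal_eq_of_mset {J K : Ideal Rc} (hJ : IsMonomialIdeal J) (hK : IsMonomialIdeal K)
    (h : mset J = mset K) : J = K := by
  rw [span_mset hJ, span_mset hK, h]

def ydOf (J : Ideal Rc) (hfin : ((mset J)ᶜ).Finite) : YoungDiagram where
  cells := (hfin.image dm).toFinset
  isLowerSet := by
    rw [Set.Finite.coe_toFinset]
    rintro c c' hle ⟨d, hd, rfl⟩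
    refine ⟨em c', fun hmem => ?_, dm_em c'⟩
    exact hd (mset_upper J (le_iff_dm.mpr (by rw [dm_em]; exact hle)) hmem)

lemma mem_ydOf {J : Ideal Rc} {hfin : ((mset J)ᶜ).Finite} {c : ℕ × ℕ} :
    c ∈ ydOf J hfin ↔ em c ∉ mset J := by
  rw [← YoungDiagram.mem_cells]
  show c ∈ (hfin.image dm).toFinset ↔ _
  rw [Set.Finite.mem_toFinset]
  constructor
  · rintro ⟨d, hd, rfl⟩; rw [em_dm]; exact hd
  · intro h; exact ⟨em c, h, dm_em c⟩

lemma card_ydOf (J : Ideal Rc) (hfin : ((mset J)ᶜ).Finite) :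
    (ydOf J hfin).card = ((mset J)ᶜ).ncard := by
  show (hfin.image dm).toFinset.card = _
  rw [← Set.ncard_eq_toFinset_card _ (hfin.image dm),
    Set.ncard_image_of_injective _ dm_injective]

def Uset (Y : YoungDiagram) (S : Finset (ℕ × ℕ)) : Set (Fin 2 →₀ ℕ) :=
  {d | dm d ∉ Y ∨ dm d ∈ S}

lemma removable_spec {Y : YoungDiagram} {S : Finset (ℕ × ℕ)} (hS : S ⊆ Y.removables)
    {c : ℕ × ℕ} (hc : c ∈ S) :
    c ∈ Y ∧ (c.1 + 1, c.2) ∉ Y ∧ (c.1, c.2 + 1) ∉ Y := by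
  have := hS hc
  rw [YoungDiagram.removables, Finset.mem_filter, YoungDiagram.mem_cells] at this
  exact ⟨this.1, this.2⟩

lemma Uset_upper (Y : YoungDiagram) (S : Finset (ℕ × ℕ)) (hS : S ⊆ Y.removables) :
    IsUpperSet (Uset Y S) := by
  intro d d' hle hd
  have hdm : dm d ≤ dm d' := le_iff_dm.mp hle
  rcases hd with hd | hd
  · exact Or.inl (fun h => hd (Y.isLowerSet hdm h))
  · by_cases heq : dm d = dm d'
    · exact Or.inr (heq ▸ hd)
    · obtain ⟨hY, hx, hy⟩ := removable_spec hS hd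
      left
      intro h'
      rcases Prod.le_def.mp hdm with ⟨h1, h2⟩
      rcases lt_or_eq_of_le h1 with h1 | h1
      · exact hx (Y.isLowerSet (Prod.le_def.mpr ⟨h1, h2⟩) h')
      · rcases lt_or_eq_of_le h2 with h2 | h2
        · exact hy (Y.isLowerSet (Prod.le_def.mpr ⟨le_of_eq h1, h2⟩) h')
        · exact heq (Prod.ext h1 h2)

def bwdI (Y : YoungDiagram) (S : Finset (ℕ × ℕ)) : Ideal Rc :=
  Ideal.span ((fun d => (monomial d (1 : ℂ) : Rc)) '' Uset Y S)

lemma bwdI_monomial (Y : YoungDiagram) (S : Finset (ℕ × ℕ)) (hS : S ⊆ Y.removables) :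
    mset (bwdI Y S) = Uset Y S :=
  mset_span (Uset_upper Y S hS)

lemma compl_Uset (Y : YoungDiagram) (S : Finset (ℕ × ℕ)) :
    (Uset Y S)ᶜ = em '' ↑(Y.cells \ S) := by
  ext d
  simp only [Uset, Set.mem_compl_iff, Set.mem_setOf_eq, not_or, not_not, Set.mem_image,
    Finset.coe_sdiff, Set.mem_diff, Finset.mem_coe, YoungDiagram.mem_cells]
  constructor
  · rintro ⟨h1, h2⟩
    exact ⟨dm d, ⟨h1, h2⟩, em_dm d⟩
  · rintro ⟨c, ⟨h1, h2⟩, rfl⟩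
    rw [dm_em]
    exact ⟨h1, h2⟩

lemma compl_Uset_finite (Y : YoungDiagram) (S : Finset (ℕ × ℕ)) :
    ((Uset Y S)ᶜ).Finite := by
  rw [compl_Uset]
  exact ((Y.cells \ S).finite_toSet).image em

lemma compl_Uset_ncard (Y : YoungDiagram) (S : Finset (ℕ × ℕ)) :
    ((Uset Y S)ᶜ).ncard = (Y.cells \ S).card := by
  rw [compl_Uset, Set.ncard_image_of_injective _ em_injective, Set.ncard_coe_finset]

lemma em_succ1 (c : ℕ × ℕ) : em (c.1 + 1, c.2) = Finsupp.single 0 1 + em c := by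
  ext i
  fin_cases i <;> simp [em, Finsupp.single_apply] <;> omega

lemma em_succ2 (c : ℕ × ℕ) : em (c.1, c.2 + 1) = Finsupp.single 1 1 + em c := by
  ext i
  fin_cases i <;> simp [em, Finsupp.single_apply] <;> omega

lemma X_mul_monomial (i : Fin 2) (d : Fin 2 →₀ ℕ) :
    (X i : Rc) * monomial d 1 = monomial (Finsupp.single i 1 + d) 1 := by
  rw [← pow_one (X i : Rc), X_pow_eq_monomial, monomial_mul, one_mul]

lemma mul_mem_bwd (Y : YoungDiagram) (S : Finset (ℕ × ℕ)) (hS : S ⊆ Y.removables)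
    (i : Fin 2) : ∀ f ∈ bwdI Y S, (X i : Rc) * f ∈ bwdI Y ∅ := by
  intro f hf
  have hle : bwdI Y S ≤ Submodule.comap
      ((LinearMap.mulLeft Rc (X i : Rc)) : Rc →ₗ[Rc] Rc) (bwdI Y ∅) := by
    rw [bwdI, Ideal.span_le]
    rintro _ ⟨d, hd, rfl⟩
    show (X i : Rc) * monomial d 1 ∈ bwdI Y ∅
    rw [X_mul_monomial]
    have hupper := bwdI_monomial Y ∅ (Finset.empty_subset _)
    have : Finsupp.single i 1 + d ∈ Uset Y ∅ := by
      left
      rcases hd with hd | hd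
      · intro h
        exact hd (Y.isLowerSet (le_iff_dm.mp (by simp [Finsupp.le_def, Finsupp.add_apply])) h)
      · obtain ⟨hY, hx, hy⟩ := removable_spec hS hd
        have h01 : i = 0 ∨ i = 1 := by fin_cases i; exacts [Or.inl rfl, Or.inr rfl]
        rcases h01 with rfl | rfl
        · intro h
          apply hx
          have : dm (Finsupp.single (0 : Fin 2) 1 + d) = ((dm d).1 + 1, (dm d).2) := by
            simp [dm, Finsupp.add_apply, Finsupp.single_apply]
            omega
          rwa [this] at h
        · intro h
          apply hy
          have : dm (Finsupp.single (1 : Fin 2) 1 + d) = ((dm d).1, (dm d).2 + 1) := by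
            simp [dm, Finsupp.add_apply, Finsupp.single_apply]
            omega
          rwa [this] at h
    rw [← hupper] at this
    exact this
  exact hle hf


lemma bwdI_isMonomial (Y : YoungDiagram) (S : Finset (ℕ × ℕ)) :
    IsMonomialIdeal (bwdI Y S) := ⟨Uset Y S, rfl⟩

lemma mono_mem_bwd_iff (Y : YoungDiagram) (S : Finset (ℕ × ℕ)) (hS : S ⊆ Y.removables)
    {d : Fin 2 →₀ ℕ} : (monomial d (1 : ℂ) : Rc) ∈ bwdI Y S ↔ d ∈ Uset Y S := by
  conv_rhs => rw [← bwdI_monomial Y S hS]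
  exact Iff.rfl

lemma fd_bwd (Y : YoungDiagram) (S : Finset (ℕ × ℕ)) (hS : S ⊆ Y.removables) :
    FiniteDimensional ℂ (Rc ⧸ bwdI Y S) := by
  apply quot_fd (bwdI_isMonomial Y S)
  rw [bwdI_monomial Y S hS]
  exact compl_Uset_finite Y S

lemma finrank_bwd (Y : YoungDiagram) (S : Finset (ℕ × ℕ)) (hS : S ⊆ Y.removables) :
    Module.finrank ℂ (Rc ⧸ bwdI Y S) = (Y.cells \ S).card := by
  have hm := bwdI_monomial Y S hS
  have hfin : ((mset (bwdI Y S))ᶜ).Finite := by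
    rw [hm]; exact compl_Uset_finite Y S
  rw [finrank_quot (bwdI_isMonomial Y S) hfin, hm, compl_Uset_ncard]

lemma bwd_le (Y : YoungDiagram) (S : Finset (ℕ × ℕ)) : bwdI Y ∅ ≤ bwdI Y S := by
  apply Ideal.span_mono
  apply Set.image_mono
  rintro d (hd | hd)
  · exact Or.inl hd
  · exact absurd hd (Finset.notMem_empty _)

lemma filter_cells {I' I : Ideal Rc} (hle : I' ≤ I)
    (hfin' : ((mset I')ᶜ).Finite) (hfinI : ((mset I)ᶜ).Finite) :
    ((ydOf I' hfin').cells.filter (fun c => ¬ ((monomial (em c) (1 : ℂ) : Rc) ∈ I)))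
      = (ydOf I hfinI).cells := by
  ext c
  rw [Finset.mem_filter, YoungDiagram.mem_cells, YoungDiagram.mem_cells, mem_ydOf, mem_ydOf]
  constructor
  · rintro ⟨-, h⟩; exact h
  · intro h; exact ⟨fun h' => h (mset_mono hle h'), h⟩

lemma fwdS_subset {I' I : Ideal Rc}
    (hfin' : ((mset I')ᶜ).Finite)
    (hx : ∀ f ∈ I, (X (0 : Fin 2) : Rc) * f ∈ I')
    (hy : ∀ f ∈ I, (X (1 : Fin 2) : Rc) * f ∈ I') :
    (ydOf I' hfin').cells.filter (fun c => (monomial (em c) (1 : ℂ) : Rc) ∈ I)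
      ⊆ (ydOf I' hfin').removables := by
  intro c hc
  rw [Finset.mem_filter] at hc
  obtain ⟨hcell, hmem⟩ := hc
  rw [YoungDiagram.removables, Finset.mem_filter]
  refine ⟨hcell, ?_, ?_⟩
  · rw [mem_ydOf, not_not]
    show (monomial (em (c.1 + 1, c.2)) (1 : ℂ) : Rc) ∈ I'
    rw [em_succ1, ← X_mul_monomial]
    exact hx _ hmem
  · rw [mem_ydOf, not_not]
    show (monomial (em (c.1, c.2 + 1)) (1 : ℂ) : Rc) ∈ I'
    rw [em_succ2, ← X_mul_monomial]
    exact hy _ hmem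

lemma mset_fwd {I' I : Ideal Rc} (hle : I' ≤ I) (hfin' : ((mset I')ᶜ).Finite) :
    Uset (ydOf I' hfin')
      ((ydOf I' hfin').cells.filter (fun c => (monomial (em c) (1 : ℂ) : Rc) ∈ I))
      = mset I := by
  ext d
  constructor
  · rintro (hd | hd)
    · rw [mem_ydOf, not_not, em_dm] at hd
      exact mset_mono hle hd
    · rw [Finset.mem_filter] at hd
      have h2 := hd.2
      rwa [em_dm] at h2
  · intro hd
    by_cases hd' : d ∈ mset I'
    · left
      rw [mem_ydOf, not_not, em_dm]
      exact hd'
    · right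
      rw [Finset.mem_filter, YoungDiagram.mem_cells, mem_ydOf, em_dm]
      exact ⟨hd', hd⟩


lemma Uset_empty (I' : Ideal Rc) (hfin' : ((mset I')ᶜ).Finite) :
    Uset (ydOf I' hfin') ∅ = mset I' := by
  ext d
  constructor
  · rintro (hd | hd)
    · rwa [mem_ydOf, not_not, em_dm] at hd
    · exact absurd hd (Finset.notMem_empty _)
  · intro hd
    left
    rw [mem_ydOf, not_not, em_dm]
    exact hd

lemma removables_subset (Y : YoungDiagram) : Y.removables ⊆ Y.cells := by
  unfold YoungDiagram.removables
  exact Finset.filter_subset _ _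

end

end FPB

open FPB

/-- There is a bijection between (i) pairs `(I', I)` of monomial ideals of `ℂ[x,y]`
with `I' ⊆ I`, `dim_ℂ ℂ[x,y]/I = N`, `dim_ℂ ℂ[x,y]/I' = N + n` (so `dim_ℂ I/I' = n`)
and `I/I'` annihilated by `x` and `y`; and (ii) pairs `(Y,S)` of a Young diagram with
`N + n` boxes and a set `S` of `n` removable boxes of `Y`.  The bijection sends
`(I', I)` to `Y = Y(I') = {(a,b) : x^a y^b ∉ I'}` and `S = {(a,b) : x^a y^b ∈ I \ I'}`. -/
theorem fixed_points_bijection (N n : ℕ) :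
    ∃ e : {p : Ideal (MvPolynomial (Fin 2) ℂ) × Ideal (MvPolynomial (Fin 2) ℂ) //
          IsMonomialIdeal p.1 ∧ IsMonomialIdeal p.2 ∧ p.1 ≤ p.2 ∧
          FiniteDimensional ℂ (MvPolynomial (Fin 2) ℂ ⧸ p.1) ∧
          Module.finrank ℂ (MvPolynomial (Fin 2) ℂ ⧸ p.2) = N ∧
          Module.finrank ℂ (MvPolynomial (Fin 2) ℂ ⧸ p.1) = N + n ∧
          (∀ f ∈ p.2, MvPolynomial.X (0 : Fin 2) * f ∈ p.1) ∧
          (∀ f ∈ p.2, MvPolynomial.X (1 : Fin 2) * f ∈ p.1)} ≃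
        {p : YoungDiagram × Finset (ℕ × ℕ) //
          p.1.card = N + n ∧ p.2 ⊆ p.1.removables ∧ p.2.card = n},
      ∀ q,
        (∀ c : ℕ × ℕ, c ∈ (e q).val.1 ↔
          MvPolynomial.X (0 : Fin 2) ^ c.1 * MvPolynomial.X (1 : Fin 2) ^ c.2 ∉ q.val.1) ∧
        (∀ c : ℕ × ℕ, c ∈ (e q).val.2 ↔
          (MvPolynomial.X (0 : Fin 2) ^ c.1 * MvPolynomial.X (1 : Fin 2) ^ c.2 ∈ q.val.2 ∧
            MvPolynomial.X (0 : Fin 2) ^ c.1 * MvPolynomial.X (1 : Fin 2) ^ c.2 ∉ q.val.1)) := by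
  classical
  refine ⟨⟨fun q => ⟨(ydOf q.1.1 (compl_finite q.2.1 q.2.2.2.2.1),
      (ydOf q.1.1 (compl_finite q.2.1 q.2.2.2.2.1)).cells.filter
        (fun c => (MvPolynomial.monomial (em c) (1 : ℂ)) ∈ q.1.2)), ?_⟩,
    fun p => ⟨(bwdI p.1.1 ∅, bwdI p.1.1 p.1.2), ?_⟩, ?_, ?_⟩, ?_⟩
  · -- forward map lands in the target subtype
    obtain ⟨⟨I', I⟩, h1, h2, hle, hfd, hrkI, hrkI', hx, hy⟩ := q
    dsimp only
    refine ⟨?_, fwdS_subset _ hx hy, ?_⟩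
    · rw [show (ydOf I' (compl_finite h1 hfd)).card
          = ((mset I')ᶜ).ncard from card_ydOf _ _,
        ← finrank_quot h1 (compl_finite h1 hfd)]
      exact hrkI'
    · have hfinI : ((mset I)ᶜ).Finite :=
        (compl_finite h1 hfd).subset (Set.compl_subset_compl.mpr (mset_mono hle))
      have hsplit := Finset.card_filter_add_card_filter_not
        (s := (ydOf I' (compl_finite h1 hfd)).cells)
        (p := fun c => (MvPolynomial.monomial (em c) (1 : ℂ)) ∈ I)
      rw [filter_cells hle _ hfinI] at hsplit
      have hcI : (ydOf I hfinI).cells.card = N := by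
        rw [show (ydOf I hfinI).cells.card = ((mset I)ᶜ).ncard from card_ydOf _ _,
          ← finrank_quot h2 hfinI]
        exact hrkI
      have hcI' : (ydOf I' (compl_finite h1 hfd)).cells.card = N + n := by
        rw [show (ydOf I' (compl_finite h1 hfd)).cells.card
            = ((mset I')ᶜ).ncard from card_ydOf _ _,
          ← finrank_quot h1 (compl_finite h1 hfd)]
        exact hrkI'
      dsimp only at hsplit
      omega
  · -- backward map lands in the source subtype
    obtain ⟨⟨Y, S⟩, hcard, hSsub, hScard⟩ := p
    dsimp only at hcard hSsub hScard ⊢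
    have hsub : S ⊆ Y.cells := fun c hc => removables_subset Y (hSsub hc)
    refine ⟨bwdI_isMonomial Y ∅, bwdI_isMonomial Y S, bwd_le Y S,
      fd_bwd Y ∅ (Finset.empty_subset _), ?_, ?_,
      mul_mem_bwd Y S hSsub 0, mul_mem_bwd Y S hSsub 1⟩
    · rw [finrank_bwd Y S hSsub, Finset.card_sdiff_of_subset hsub]
      have hc : Y.cells.card = N + n := hcard
      omega
    · rw [finrank_bwd Y ∅ (Finset.empty_subset _), Finset.sdiff_empty]
      exact hcard
  · -- left inverse
    intro q
    obtain ⟨⟨I', I⟩, h1, h2, hle, hfd, hrkI, hrkI', hx, hy⟩ := q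
    dsimp only
    apply Subtype.ext
    apply Prod.ext
    · exact ideal_eq_of_mset (bwdI_isMonomial _ _) h1
        (by rw [bwdI_monomial _ _ (Finset.empty_subset _), Uset_empty])
    · exact ideal_eq_of_mset (bwdI_isMonomial _ _) h2
        (by rw [bwdI_monomial _ _ (fwdS_subset _ hx hy), mset_fwd hle])
  · -- right inverse
    intro p
    obtain ⟨⟨Y, S⟩, hcard, hSsub, hScard⟩ := p
    dsimp only at hcard hSsub hScard ⊢
    have hsub : S ⊆ Y.cells := fun c hc => removables_subset Y (hSsub hc)
    apply Subtype.ext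
    apply Prod.ext
    · apply YoungDiagram.ext
      ext c
      dsimp only
      rw [YoungDiagram.mem_cells, YoungDiagram.mem_cells, mem_ydOf,
        bwdI_monomial Y ∅ (Finset.empty_subset _)]
      simp [Uset, dm_em]
    · ext c
      dsimp only
      rw [Finset.mem_filter, YoungDiagram.mem_cells, mem_ydOf,
        bwdI_monomial Y ∅ (Finset.empty_subset _),
        mono_mem_bwd_iff Y S hSsub]
      constructor
      · rintro ⟨hcY, hU⟩
        rcases hU with hU | hU
        · exact absurd (Or.inl hU) hcY
        · rwa [dm_em] at hU
      · intro hc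
        constructor
        · rintro (h | h)
          · rw [dm_em] at h
            exact h ((YoungDiagram.mem_cells c).mp (hsub hc))
          · exact absurd h (Finset.notMem_empty _)
        · right
          rw [dm_em]
          exact hc
  · -- the characterizing property
    intro q
    obtain ⟨⟨I', I⟩, h1, h2, hle, hfd, hrkI, hrkI', hx, hy⟩ := q
    dsimp only
    constructor
    · intro c
      show c ∈ ydOf I' (compl_finite h1 hfd) ↔ _
      rw [mem_ydOf]
      show (MvPolynomial.monomial (em c) (1 : ℂ)) ∉ I' ↔ _
      rw [monomial_em]
    · intro c
      show c ∈ (ydOf I' (compl_finite h1 hfd)).cells.filter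
          (fun c => (MvPolynomial.monomial (em c) (1 : ℂ)) ∈ I) ↔ _
      rw [Finset.mem_filter, YoungDiagram.mem_cells, mem_ydOf]
      show ¬ ((MvPolynomial.monomial (em c) (1 : ℂ)) ∈ I')
          ∧ (MvPolynomial.monomial (em c) (1 : ℂ)) ∈ I ↔ _
      rw [monomial_em]
      exact and_comm
end

section
/- Let Y be a Young diagram, and let S be a set of m removable boxes of Y. Then the number of relevant boxes s ∈ Y (boxes that are not irrelevant) whose arm length a_Y(s) is positive equals |Y| − m(m−1)/2 − l(Y), where l(Y) is the number of columns of Y. -/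
open scoped Classical

section aux

variable {Y : YoungDiagram} {S : Finset (ℕ × ℕ)}

lemma rem_mem {s : ℕ × ℕ} (h : s ∈ Y.removables) : s ∈ Y := (Finset.mem_filter.1 h).1

lemma rem_rowLen {s : ℕ × ℕ} (h : s ∈ Y.removables) : Y.rowLen s.1 = s.2 + 1 := by
  rw [YoungDiagram.removables, Finset.mem_filter] at h
  have h1 := YoungDiagram.mem_iff_lt_rowLen.1 (by simpa using h.1)
  have h2 : ¬ (s.2 + 1 < Y.rowLen s.1) := fun hc => h.2.2 (YoungDiagram.mem_iff_lt_rowLen.2 hc)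
  omega

lemma rem_colLen {s : ℕ × ℕ} (h : s ∈ Y.removables) : Y.colLen s.2 = s.1 + 1 := by
  rw [YoungDiagram.removables, Finset.mem_filter] at h
  have h1 := YoungDiagram.mem_iff_lt_colLen.1 (by simpa using h.1)
  have h2 : ¬ (s.1 + 1 < Y.colLen s.2) := fun hc => h.2.1 (YoungDiagram.mem_iff_lt_colLen.2 hc)
  omega

lemma rem_inj_fst {s t : ℕ × ℕ} (hs : s ∈ Y.removables) (ht : t ∈ Y.removables)
    (h : s.1 = t.1) : s = t := by
  have h1 := rem_rowLen hs
  have h2 := rem_rowLen ht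
  rw [h] at h1
  exact Prod.ext h (by omega)

/-- The ends of the rows are in bijection with the rows. -/
lemma card_row_ends (Y : YoungDiagram) :
    (Y.cells.filter fun c => (c.1, c.2 + 1) ∉ Y).card = Y.colLen 0 := by
  rw [show Y.colLen 0 = (Finset.range (Y.colLen 0)).card by simp]
  refine Finset.card_nbij' (fun c => c.1) (fun i => (i, Y.rowLen i - 1)) ?_ ?_ ?_ ?_
  · intro c hc
    rw [Finset.mem_coe, Finset.mem_filter, YoungDiagram.mem_cells] at hc
    have := YoungDiagram.mem_iff_lt_colLen.1 hc.1
    have := Y.colLen_anti 0 c.2 (Nat.zero_le _)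
    simp only [Finset.mem_coe, Finset.mem_range]; omega
  · intro i hi
    rw [Finset.mem_coe, Finset.mem_range] at hi
    have h0 : (i, 0) ∈ Y := YoungDiagram.mem_iff_lt_colLen.2 hi
    have hr : 0 < Y.rowLen i := YoungDiagram.mem_iff_lt_rowLen.1 h0
    simp only [Finset.mem_coe, Finset.mem_filter, YoungDiagram.mem_cells,
      YoungDiagram.mem_iff_lt_rowLen]
    omega
  · intro c hc
    dsimp only
    rw [Finset.mem_coe, Finset.mem_filter, YoungDiagram.mem_cells] at hc
    have h1 := YoungDiagram.mem_iff_lt_rowLen.1 hc.1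
    have h2 : ¬ (c.2 + 1 < Y.rowLen c.1) := fun h => hc.2 (YoungDiagram.mem_iff_lt_rowLen.2 h)
    exact Prod.ext rfl (by omega)
  · intro i hi; rfl

lemma card_irr (hS : S ⊆ Y.removables) :
    (Y.cells.filter fun c =>
        (Y.colLen c.2 - 1, c.2) ∈ S ∧ (c.1, Y.rowLen c.1 - 1) ∈ S).card
      = ((S ×ˢ S).filter fun p => p.2.1 ≤ p.1.1).card := by
  refine Finset.card_nbij'
    (fun c => ((Y.colLen c.2 - 1, c.2), (c.1, Y.rowLen c.1 - 1)))
    (fun p => (p.2.1, p.1.2)) ?_ ?_ ?_ ?_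
  · intro c hc
    rw [Finset.mem_coe, Finset.mem_filter, YoungDiagram.mem_cells] at hc
    rw [Finset.mem_coe, Finset.mem_filter, Finset.mem_product]
    refine ⟨⟨hc.2.1, hc.2.2⟩, ?_⟩
    have := YoungDiagram.mem_iff_lt_colLen.1 hc.1
    simp only; omega
  · intro p hp
    rw [Finset.mem_coe, Finset.mem_filter, Finset.mem_product] at hp
    obtain ⟨⟨h1, h2⟩, hle⟩ := hp
    have h1' := hS h1; have h2' := hS h2
    have hu := rem_colLen h1'; have hv := rem_rowLen h2'
    have huY := rem_mem h1'
    have hcell : (p.2.1, p.1.2) ∈ Y := by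
      have := YoungDiagram.mem_iff_lt_colLen.1 huY
      exact YoungDiagram.mem_iff_lt_colLen.2 (by omega)
    rw [Finset.mem_coe, Finset.mem_filter, YoungDiagram.mem_cells]
    exact ⟨hcell, by simpa [hu] using h1, by simpa [hv] using h2⟩
  · intro c _hc
    rfl
  · intro p hp
    rw [Finset.mem_coe, Finset.mem_filter, Finset.mem_product] at hp
    obtain ⟨⟨h1, h2⟩, _⟩ := hp
    have hu := rem_colLen (hS h1); have hv := rem_rowLen (hS h2)
    have : Y.colLen p.1.2 - 1 = p.1.1 := by omega
    have h2' : Y.rowLen p.2.1 - 1 = p.2.2 := by omega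
    ext <;> simp [this, h2']

lemma card_pairs (hS : S ⊆ Y.removables) :
    2 * ((S ×ˢ S).filter fun p => p.2.1 ≤ p.1.1).card = S.card * S.card + S.card := by
  set T := (S ×ˢ S).filter fun p => (p.2.1 : ℕ) ≤ p.1.1 with hT
  set T' := (S ×ˢ S).filter fun p => (p.1.1 : ℕ) ≤ p.2.1 with hT'
  have hswap : T.card = T'.card := by
    refine Finset.card_nbij' (fun p => (p.2, p.1)) (fun p => (p.2, p.1)) ?_ ?_ ?_ ?_ <;>
      simp +contextual [Set.MapsTo, Set.LeftInvOn, Set.RightInvOn, hT, hT', Finset.mem_product, and_comm]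
  have hunion : T ∪ T' = S ×ˢ S := by
    ext p
    simp only [hT, hT', Finset.mem_union, Finset.mem_filter]
    constructor
    · rintro (⟨h, _⟩ | ⟨h, _⟩) <;> exact h
    · intro h; rcases le_total p.2.1 p.1.1 with h' | h'
      · exact Or.inl ⟨h, h'⟩
      · exact Or.inr ⟨h, h'⟩
  have hinter : T ∩ T' = (S ×ˢ S).filter fun p => p.1 = p.2 := by
    ext p
    simp only [hT, hT', Finset.mem_inter, Finset.mem_filter]
    constructor
    · rintro ⟨⟨h, h1⟩, _, h2⟩
      refine ⟨h, ?_⟩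
      rw [Finset.mem_product] at h
      exact rem_inj_fst (hS h.1) (hS h.2) (by omega)
    · rintro ⟨h, he⟩
      exact ⟨⟨h, by rw [he]⟩, ⟨h, by rw [he]⟩⟩
  have hdcard : ((S ×ˢ S).filter fun p => p.1 = p.2).card = S.card := by
    refine Finset.card_nbij' (fun p => p.1) (fun a => (a, a)) ?_ ?_ ?_ ?_ <;>
      simp +contextual [Set.MapsTo, Set.LeftInvOn, Set.RightInvOn, Finset.mem_product]
  have := Finset.card_union_add_card_inter T T'
  rw [hunion, hinter, hdcard, Finset.card_product, ← hswap] at this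
  omega

end aux

/-- Let `S` be a set of `m` marked removable boxes of a Young diagram `Y`.  A box is
irrelevant if both the last box of its column and the last box of its row are marked,
and relevant otherwise.  The number of relevant boxes with positive arm length
(i.e. having a further box after them in their row, `(c.1, c.2+1) ∈ Y`) equals
`|Y| − m(m−1)/2 − l(Y)`, where `l(Y) = colLen 0` is the number of columns of `Y`
(the number of lines transverse to the arm direction); stated additively to avoid
truncated subtraction. -/
theorem card_relevant_positive_arm (Y : YoungDiagram) (m : ℕ) (S : Finset (ℕ × ℕ))
    (hS : S ⊆ Y.removables) (hm : S.card = m) :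
    (Y.cells.filter fun c =>
        ¬((Y.colLen c.2 - 1, c.2) ∈ S ∧ (c.1, Y.rowLen c.1 - 1) ∈ S) ∧
          (c.1, c.2 + 1) ∈ Y).card + m * (m - 1) / 2 + Y.colLen 0 = Y.card := by
  classical
  set P : ℕ × ℕ → Prop := fun c =>
    (Y.colLen c.2 - 1, c.2) ∈ S ∧ (c.1, Y.rowLen c.1 - 1) ∈ S with hP
  set Q : ℕ × ℕ → Prop := fun c => (c.1, c.2 + 1) ∈ Y with hQ
  -- split cells by Q
  have hsplit1 : (Y.cells.filter Q).card + (Y.cells.filter fun c => ¬ Q c).card = Y.card :=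
    Finset.card_filter_add_card_filter_not Q
  have hends : (Y.cells.filter fun c => ¬ Q c).card = Y.colLen 0 := card_row_ends Y
  -- split filter Q by P
  have hsplit2 : ((Y.cells.filter Q).filter P).card
      + ((Y.cells.filter Q).filter fun c => ¬ P c).card = (Y.cells.filter Q).card :=
    Finset.card_filter_add_card_filter_not P
  -- split irrelevant by Q
  have hsplit3 : ((Y.cells.filter P).filter Q).card
      + ((Y.cells.filter P).filter fun c => ¬ Q c).card = (Y.cells.filter P).card :=
    Finset.card_filter_add_card_filter_not Q
  -- irrelevant boxes with zero arm are exactly S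
  have hzero : (Y.cells.filter P).filter (fun c => ¬ Q c) = S := by
    ext c
    simp only [Finset.mem_filter, YoungDiagram.mem_cells, hP, hQ]
    constructor
    · rintro ⟨⟨hc, _, hrow⟩, hnq⟩
      have h1 := YoungDiagram.mem_iff_lt_rowLen.1 hc
      have h2 : ¬ (c.2 + 1 < Y.rowLen c.1) := fun h => hnq (YoungDiagram.mem_iff_lt_rowLen.2 h)
      have : Y.rowLen c.1 - 1 = c.2 := by omega
      rwa [this] at hrow
    · intro hc
      have hr := hS hc
      have hcY := rem_mem hr
      have h1 := rem_rowLen hr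
      have h2 := rem_colLen hr
      refine ⟨⟨hcY, ?_, ?_⟩, ?_⟩
      · rw [show Y.colLen c.2 - 1 = c.1 by omega]; exact hc
      · rw [show Y.rowLen c.1 - 1 = c.2 by omega]; exact hc
      · intro h
        have := YoungDiagram.mem_iff_lt_rowLen.1 h; omega
  -- total irrelevant count
  have hirr := card_irr hS
  have hpairs := card_pairs hS
  rw [hm] at hpairs
  -- commute the two filters
  have hcomm : (Y.cells.filter P).filter Q = (Y.cells.filter Q).filter P := by
    rw [Finset.filter_filter, Finset.filter_filter]
    exact Finset.filter_congr (by intro x _; tauto)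
  -- arithmetic
  have hmm : m * m = m * (m - 1) + m := by cases m with
    | zero => rfl
    | succ n => simp [Nat.succ_sub_one]; ring
  have hdiv : m * (m - 1) / 2 * 2 = m * (m - 1) := by
    apply Nat.div_mul_cancel
    cases m with
    | zero => simp
    | succ n =>
      simpa [Nat.succ_sub_one, Nat.mul_comm] using (Nat.even_mul_succ_self n).two_dvd
  rw [hzero, hm, hcomm, hirr] at hsplit3
  have hgoal : (Y.cells.filter fun c =>
        ¬((Y.colLen c.2 - 1, c.2) ∈ S ∧ (c.1, Y.rowLen c.1 - 1) ∈ S) ∧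
          (c.1, c.2 + 1) ∈ Y) = (Y.cells.filter Q).filter fun c => ¬ P c := by
    rw [Finset.filter_filter]
    exact Finset.filter_congr (by intro x _; simp only [hP, hQ]; tauto)
  rw [hgoal]
  omega
end
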